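/- arXiv:1402.6568 — 2 statements merged into one kernel-verified Lean document; each statement's English description precedes it below -/
import Mathlib

section
/- Let τ ∈ [-∞, 0], T > 0, β, γ ∈ (0,1) with β + γ < 1, and let F : ℝ² → ℂ satisfy: F(t,·) ∈ L¹(ds) for every t ∈ [0,T]; for Lebesgue-a.e. s ∈ ℝ the map t ↦ F(t,s) is continuous on [0,T] \ {s}; and for every t ∈ [0,T] there exist ε > 0 and C > 0 with ∫_{-∞}^{t-2ε} sup_{r ∈ [max(0,t-ε), min(t+ε,T)]} |F(r,s)| ds < ∞ and |F(r,s)| ≤ C |s|^{-β} |r-s|^{-γ} for all r ∈ [max(0,t-ε), min(t+ε,T)] and s ∈ [t-2ε, r). Then the function I_F(t) := ∫_{-∞}^t F(t,s) ds is continuous on [0,T]. -/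
open Real MeasureTheory Set intervalIntegral
open scoped Topology

private lemma aux_int {θ : ℝ} (hθ : θ < 1) (a b : ℝ) :
    IntegrableOn (fun x : ℝ => |x| ^ (-θ)) (Ioc a b) volume := by
  have hr : (-1:ℝ) < -θ := by linarith
  have hpos : ∀ c d : ℝ, 0 ≤ c → IntegrableOn (fun x : ℝ => |x| ^ (-θ)) (Ioc c d) volume := by
    intro c d hc
    rcases le_or_gt c d with h | h
    · exact ((intervalIntegrable_rpow' hr (a := c) (b := d)).1).congr_fun
        (fun x hx => by rw [abs_of_pos (lt_of_le_of_lt hc hx.1)]) measurableSet_Ioc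
    · rw [Ioc_eq_empty (not_lt.mpr h.le)]; exact integrableOn_empty
  have hneg : ∀ c d : ℝ, d ≤ 0 → IntegrableOn (fun x : ℝ => |x| ^ (-θ)) (Ioc c d) volume := by
    intro c d hd
    rcases le_or_gt c d with h | h
    · have h1 : IntervalIntegrable (fun x : ℝ => |x| ^ (-θ)) volume (-d) (-c) :=
        ⟨hpos _ _ (by linarith), hpos _ _ (by linarith)⟩
      have h2 := (IntervalIntegrable.iff_comp_neg (f := fun x : ℝ => |x| ^ (-θ))).mp h1
      simp only [abs_neg, neg_neg] at h2
      exact h2.2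
    · rw [Ioc_eq_empty (not_lt.mpr h.le)]; exact integrableOn_empty
  rcases le_or_gt 0 a with h | h
  · exact hpos a b h
  rcases le_or_gt b 0 with h' | h'
  · exact hneg a b h'
  · have hsub : Ioc a b ⊆ Ioc a 0 ∪ Ioc 0 b := fun x hx => by
      rcases le_or_gt x 0 with hx0 | hx0
      · exact Or.inl ⟨hx.1, hx0⟩
      · exact Or.inr ⟨hx0, hx.2⟩
    exact ((hneg a 0 le_rfl).union (hpos 0 b le_rfl)).mono_set hsub

private lemma aux_ii {θ : ℝ} (hθ : θ < 1) (a b : ℝ) :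
    IntervalIntegrable (fun x : ℝ => |x| ^ (-θ)) volume a b :=
  ⟨aux_int hθ a b, aux_int hθ b a⟩

private lemma aux_int_shift {θ : ℝ} (hθ : θ < 1) (c a b : ℝ) :
    IntegrableOn (fun x : ℝ => |x - c| ^ (-θ)) (Ioc a b) volume := by
  have := ((aux_ii hθ (a - c) (b - c)).comp_sub_right c).1
  simpa using this

private lemma aux_val {θ : ℝ} (hθ0 : 0 < θ) (hθ1 : θ < 1) {L : ℝ} (hL : 0 ≤ L) :
    ∫ x in (0:ℝ)..L, |x| ^ (-θ) = L ^ (1 - θ) / (1 - θ) := by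
  have h1 : (∫ x in (0:ℝ)..L, |x| ^ (-θ)) = ∫ x in (0:ℝ)..L, x ^ (-θ) := by
    apply intervalIntegral.integral_congr
    intro x hx
    rw [uIcc_of_le hL] at hx
    show |x| ^ (-θ) = x ^ (-θ)
    rw [abs_of_nonneg hx.1]
  rw [h1, integral_rpow (Or.inl (by linarith : (-1:ℝ) < -θ)),
    show -θ + 1 = 1 - θ from by ring, Real.zero_rpow (by linarith), sub_zero]

private lemma aux_P1 {θ : ℝ} (hθ0 : 0 < θ) (hθ1 : θ < 1) {a b : ℝ} (ha : 0 ≤ a) (hab : a ≤ b) :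
    (∫ x in a..b, |x| ^ (-θ)) ≤ (b - a) ^ (1 - θ) / (1 - θ) := by
  have hII2 : IntervalIntegrable (fun x : ℝ => |x - a| ^ (-θ)) volume a b := by
    simpa using (aux_ii hθ1 0 (b - a)).comp_sub_right a
  have hae : (fun x : ℝ => |x| ^ (-θ)) ≤ᵐ[volume.restrict (Icc a b)]
      fun x => |x - a| ^ (-θ) := by
    have hne : ∀ᵐ x : ℝ ∂volume, x ≠ a := by
      rw [ae_iff]; simpa [not_not] using Real.volume_singleton
    filter_upwards [ae_restrict_of_ae hne, ae_restrict_mem measurableSet_Icc] with x hxa hx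
    have hx0 : a < x := lt_of_le_of_ne hx.1 (Ne.symm hxa)
    rw [abs_of_pos (lt_of_le_of_lt ha hx0), abs_of_pos (by linarith : (0:ℝ) < x - a)]
    exact Real.rpow_le_rpow_of_nonpos (by linarith) (by linarith) (by linarith)
  calc (∫ x in a..b, |x| ^ (-θ)) ≤ ∫ x in a..b, |x - a| ^ (-θ) :=
        intervalIntegral.integral_mono_ae_restrict hab (aux_ii hθ1 a b) hII2 hae
    _ = ∫ x in (a-a)..(b-a), |x| ^ (-θ) :=
        intervalIntegral.integral_comp_sub_right (fun x => |x| ^ (-θ)) a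
    _ = (b - a) ^ (1 - θ) / (1 - θ) := by rw [sub_self]; exact aux_val hθ0 hθ1 (by linarith)

private lemma aux_P2 {θ : ℝ} (hθ0 : 0 < θ) (hθ1 : θ < 1) {a b : ℝ} (hb : b ≤ 0) (hab : a ≤ b) :
    (∫ x in a..b, |x| ^ (-θ)) ≤ (b - a) ^ (1 - θ) / (1 - θ) := by
  have h1 : (∫ x in a..b, |x| ^ (-θ)) = ∫ x in (-b)..(-a), |x| ^ (-θ) := by
    rw [← intervalIntegral.integral_comp_neg (fun x => |x| ^ (-θ))]
    simp [abs_neg]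
  rw [h1]
  have := aux_P1 hθ0 hθ1 (by linarith : (0:ℝ) ≤ -b) (by linarith : -b ≤ -a)
  simpa [show -a - -b = b - a from by ring] using this

private lemma aux_F {θ : ℝ} (hθ0 : 0 < θ) (hθ1 : θ < 1) {a b : ℝ} (hab : a ≤ b) :
    (∫ x in a..b, |x| ^ (-θ)) ≤ 2 * ((b - a) ^ (1 - θ) / (1 - θ)) := by
  have hp : (0:ℝ) < 1 - θ := by linarith
  have hX : 0 ≤ (b - a) ^ (1 - θ) / (1 - θ) :=
    div_nonneg (Real.rpow_nonneg (by linarith) _) hp.le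
  rcases le_or_gt 0 a with h | h
  · have := aux_P1 hθ0 hθ1 h hab
    linarith
  rcases le_or_gt b 0 with h' | h'
  · have := aux_P2 hθ0 hθ1 h' hab
    linarith
  · have hsplit : (∫ x in a..(0:ℝ), |x| ^ (-θ)) + (∫ x in (0:ℝ)..b, |x| ^ (-θ))
        = ∫ x in a..b, |x| ^ (-θ) :=
      intervalIntegral.integral_add_adjacent_intervals (aux_ii hθ1 a 0) (aux_ii hθ1 0 b)
    have h1 : (∫ x in a..(0:ℝ), |x| ^ (-θ)) ≤ (b - a) ^ (1 - θ) / (1 - θ) := by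
      have := aux_P2 hθ0 hθ1 le_rfl h.le
      refine this.trans ?_
      gcongr <;> linarith
    have h2 : (∫ x in (0:ℝ)..b, |x| ^ (-θ)) ≤ (b - a) ^ (1 - θ) / (1 - θ) := by
      have := aux_P1 hθ0 hθ1 le_rfl h'.le
      refine this.trans ?_
      gcongr <;> linarith
    linarith

private lemma aux_master {θ : ℝ} (hθ0 : 0 < θ) (hθ1 : θ < 1) (c : ℝ) {a b : ℝ} (hab : a ≤ b) :
    (∫ s in Ioc a b, |s - c| ^ (-θ)) ≤ 2 * ((b - a) ^ (1 - θ) / (1 - θ)) := by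
  rw [← intervalIntegral.integral_of_le hab,
    intervalIntegral.integral_comp_sub_right (fun x => |x| ^ (-θ)) c]
  have := aux_F hθ0 hθ1 (show a - c ≤ b - c by linarith)
  simpa [show b - c - (a - c) = b - a from by ring] using this

private lemma aux_dom {β γ : ℝ} (hβ : 0 < β) (hγ : 0 < γ) (t s : ℝ) :
    |s| ^ (-β) * |t - s| ^ (-γ) ≤ |s| ^ (-(β + γ)) + |s - t| ^ (-(β + γ)) := by
  rcases le_total |s| |t - s| with h | h
  · rcases eq_or_lt_of_le (abs_nonneg s) with h0 | h0
    · rw [← h0, Real.zero_rpow (by linarith : -β ≠ 0), zero_mul]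
      positivity
    · have hle : |t - s| ^ (-γ) ≤ |s| ^ (-γ) :=
        Real.rpow_le_rpow_of_nonpos h0 h (by linarith)
      calc |s| ^ (-β) * |t - s| ^ (-γ) ≤ |s| ^ (-β) * |s| ^ (-γ) := by
            exact mul_le_mul_of_nonneg_left hle (Real.rpow_nonneg (abs_nonneg s) _)
        _ = |s| ^ (-(β + γ)) := by
            rw [show -(β + γ) = -β + -γ from by ring, Real.rpow_add h0]
        _ ≤ _ := le_add_of_nonneg_right (Real.rpow_nonneg (abs_nonneg _) _)
  · rcases eq_or_lt_of_le (abs_nonneg (t - s)) with h0 | h0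
    · rw [← h0, Real.zero_rpow (by linarith : -γ ≠ 0), mul_zero]
      positivity
    · have hle : |s| ^ (-β) ≤ |t - s| ^ (-β) :=
        Real.rpow_le_rpow_of_nonpos h0 h (by linarith)
      calc |s| ^ (-β) * |t - s| ^ (-γ) ≤ |t - s| ^ (-β) * |t - s| ^ (-γ) := by
            exact mul_le_mul_of_nonneg_right hle (Real.rpow_nonneg (abs_nonneg _) _)
        _ = |s - t| ^ (-(β + γ)) := by
            rw [abs_sub_comm s t, show -(β + γ) = -β + -γ from by ring, Real.rpow_add h0]
        _ ≤ _ := le_add_of_nonneg_left (Real.rpow_nonneg (abs_nonneg _) _)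

theorem continuity_of_volterra_integral
    (T : ℝ) (hT : 0 < T) (β γ : ℝ) (hβ : β ∈ Set.Ioo (0 : ℝ) 1)
    (hγ : γ ∈ Set.Ioo (0 : ℝ) 1) (hβγ : β + γ < 1)
    (F : ℝ → ℝ → ℂ)
    (hInt : ∀ t ∈ Set.Icc 0 T, Integrable (F t) (volume : Measure ℝ))
    (hCont : ∀ᵐ s ∂(volume : Measure ℝ),
      ContinuousOn (fun t => F t s) (Set.Icc 0 T \ {s}))
    (hLoc : ∀ t ∈ Set.Icc 0 T, ∃ ε > (0 : ℝ), ∃ C > (0 : ℝ),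
      (IntegrableOn
        (fun s => ⨆ r : Set.Icc (max 0 (t - ε)) (min (t + ε) T),
          ‖F (r : ℝ) s‖)
        (Set.Iic (t - 2 * ε)) (volume : Measure ℝ)) ∧
      (∀ r ∈ Set.Icc (max 0 (t - ε)) (min (t + ε) T), ∀ s ∈ Set.Ico (t - 2 * ε) r,
        ‖F r s‖ ≤ C * |s| ^ (-β) * |r - s| ^ (-γ))) :
    ContinuousOn (fun t => ∫ s in Set.Iic t, F t s) (Set.Icc 0 T) := by
  intro t₀ ht₀
  obtain ⟨ε, hε, C, hC, hsupInt, hbound⟩ := hLoc t₀ ht₀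
  obtain ⟨hβ0, hβ1⟩ := hβ
  obtain ⟨hγ0, hγ1⟩ := hγ
  set θ : ℝ := β + γ with hθdef
  have hθ0 : 0 < θ := by positivity
  have hθ1 : θ < 1 := hβγ
  have hp : (0:ℝ) < 1 - θ := by linarith
  rw [Metric.continuousWithinAt_iff]
  intro η hη
  -- ## Choice of δ
  have hωto : Filter.Tendsto (fun d : ℝ => C * 4 * ((3*d) ^ (1-θ) / (1-θ))) (𝓝 0) (𝓝 0) := by
    have h3 : Filter.Tendsto (fun d : ℝ => 3*d) (𝓝 (0:ℝ)) (𝓝 (0:ℝ)) := by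
      have h : Filter.Tendsto (fun d : ℝ => 3 * d) (𝓝 0) (𝓝 (3 * 0)) :=
        (continuous_const.mul continuous_id).tendsto (0:ℝ)
      simpa using h
    have hrp : Filter.Tendsto (fun x : ℝ => x ^ (1-θ)) (𝓝 0) (𝓝 0) := by
      have := (Real.continuousAt_rpow_const 0 (1-θ) (Or.inr hp.le)).tendsto
      simpa [Real.zero_rpow hp.ne'] using this
    have h4 := (((hrp.comp h3).div_const (1-θ)).const_mul (C*4))
    simpa using h4
  have hev : ∀ᶠ d in nhdsWithin (0:ℝ) (Set.Ioi 0),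
      (C * 4 * ((3*d) ^ (1-θ) / (1-θ)) < η/3 ∧ d < ε) ∧ 0 < d := by
    refine ((((hωto.mono_left nhdsWithin_le_nhds).eventually_lt_const (by positivity)).and
      ((eventually_lt_nhds hε).filter_mono nhdsWithin_le_nhds)).and ?_)
    exact self_mem_nhdsWithin
  obtain ⟨δ, ⟨hωδ, hδε⟩, hδ0⟩ := hev.exists
  -- ## Basic facts about K
  set K := Set.Icc (max 0 (t₀ - ε)) (min (t₀ + ε) T) with hKdef
  have ht₀0 : (0:ℝ) ≤ t₀ := ht₀.1
  have ht₀T : t₀ ≤ T := ht₀.2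
  have hKsub : K ⊆ Set.Icc 0 T := fun r hr =>
    ⟨le_trans (le_max_left 0 _) hr.1, le_trans hr.2 (min_le_right _ T)⟩
  have ht₀K : t₀ ∈ K := ⟨max_le ht₀0 (by linarith), le_min (by linarith) ht₀T⟩
  have hmemK : ∀ u ∈ Set.Icc 0 T, dist u t₀ < δ → u ∈ K := by
    intro u hu hdu
    rw [Real.dist_eq, abs_lt] at hdu
    exact ⟨max_le hu.1 (by linarith [hdu.1]), le_min (by linarith [hdu.2]) hu.2⟩
  -- ## The tail estimate
  have htail : ∀ u ∈ Set.Icc 0 T, dist u t₀ < δ →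
      ‖∫ s in Set.Ioc (t₀ - 2*δ) u, F u s‖ < η/3 := by
    intro u hu hdu
    have huK := hmemK u hu hdu
    rw [Real.dist_eq, abs_lt] at hdu
    have hau : t₀ - 2*δ < u := by linarith [hdu.1]
    have hInt_u := hInt u hu
    have hL3 : u - (t₀ - 2*δ) ≤ 3*δ := by linarith [hdu.2]
    have hL0 : (0:ℝ) ≤ u - (t₀ - 2*δ) := by linarith
    have h1 : ‖∫ s in Set.Ioc (t₀ - 2*δ) u, F u s‖
        ≤ ∫ s in Set.Ioc (t₀ - 2*δ) u, ‖F u s‖ := norm_integral_le_integral_norm _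
    have h2 : (∫ s in Set.Ioc (t₀ - 2*δ) u, ‖F u s‖)
        = ∫ s in Set.Ioo (t₀ - 2*δ) u, ‖F u s‖ := integral_Ioc_eq_integral_Ioo
    have h3 : (∫ s in Set.Ioo (t₀ - 2*δ) u, ‖F u s‖)
        ≤ ∫ s in Set.Ioo (t₀ - 2*δ) u, C * (|s| ^ (-θ) + |s - u| ^ (-θ)) := by
      apply setIntegral_mono_on
      · exact hInt_u.norm.integrableOn
      · apply Integrable.const_mul
        exact ((aux_int hθ1 _ _).mono_set Set.Ioo_subset_Ioc_self).add
          ((aux_int_shift hθ1 u _ _).mono_set Set.Ioo_subset_Ioc_self)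
      · exact measurableSet_Ioo
      · intro s hs
        have hb := hbound u huK s ⟨by linarith [hs.1], hs.2⟩
        calc ‖F u s‖ ≤ C * |s| ^ (-β) * |u - s| ^ (-γ) := hb
          _ = C * (|s| ^ (-β) * |u - s| ^ (-γ)) := by ring
          _ ≤ C * (|s| ^ (-θ) + |s - u| ^ (-θ)) :=
              mul_le_mul_of_nonneg_left (aux_dom hβ0 hγ0 u s) hC.le
    have h4 : (∫ s in Set.Ioo (t₀ - 2*δ) u, C * (|s| ^ (-θ) + |s - u| ^ (-θ)))
        = C * ((∫ s in Set.Ioc (t₀ - 2*δ) u, |s| ^ (-θ))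
            + ∫ s in Set.Ioc (t₀ - 2*δ) u, |s - u| ^ (-θ)) := by
      rw [← integral_Ioc_eq_integral_Ioo, MeasureTheory.integral_const_mul,
        integral_add (aux_int hθ1 _ _) (aux_int_shift hθ1 u _ _)]
    have h5 : (∫ s in Set.Ioc (t₀ - 2*δ) u, |s| ^ (-θ))
        ≤ 2 * ((3*δ) ^ (1-θ) / (1-θ)) := by
      have hm := aux_master hθ0 hθ1 0 hau.le
      simp only [sub_zero] at hm
      refine hm.trans ?_
      have hmono : (u - (t₀ - 2*δ)) ^ (1-θ) ≤ (3*δ) ^ (1-θ) :=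
        Real.rpow_le_rpow hL0 hL3 hp.le
      have := (div_le_div_iff_of_pos_right hp).mpr hmono
      linarith
    have h6 : (∫ s in Set.Ioc (t₀ - 2*δ) u, |s - u| ^ (-θ))
        ≤ 2 * ((3*δ) ^ (1-θ) / (1-θ)) := by
      refine (aux_master hθ0 hθ1 u hau.le).trans ?_
      have hmono : (u - (t₀ - 2*δ)) ^ (1-θ) ≤ (3*δ) ^ (1-θ) :=
        Real.rpow_le_rpow hL0 hL3 hp.le
      have := (div_le_div_iff_of_pos_right hp).mpr hmono
      linarith
    have key : ‖∫ s in Set.Ioc (t₀ - 2*δ) u, F u s‖ ≤ C * 4 * ((3*δ) ^ (1-θ) / (1-θ)) := by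
      calc ‖∫ s in Set.Ioc (t₀ - 2*δ) u, F u s‖
          ≤ ∫ s in Set.Ioo (t₀ - 2*δ) u, ‖F u s‖ := h2 ▸ h1
        _ ≤ ∫ s in Set.Ioo (t₀ - 2*δ) u, C * (|s| ^ (-θ) + |s - u| ^ (-θ)) := h3
        _ = C * ((∫ s in Set.Ioc (t₀ - 2*δ) u, |s| ^ (-θ))
            + ∫ s in Set.Ioc (t₀ - 2*δ) u, |s - u| ^ (-θ)) := h4
        _ ≤ C * (2 * ((3*δ) ^ (1-θ) / (1-θ)) + 2 * ((3*δ) ^ (1-θ) / (1-θ))) :=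
            mul_le_mul_of_nonneg_left (add_le_add h5 h6) hC.le
        _ = C * 4 * ((3*δ) ^ (1-θ) / (1-θ)) := by ring
    exact lt_of_le_of_lt key hωδ
  -- ## Continuity of the truncated integral
  set l := nhdsWithin t₀ (Set.Icc 0 T) with hl
  have hevIcc : ∀ᶠ t in l, t ∈ Set.Icc 0 T := eventually_mem_nhdsWithin
  have hevdist : ∀ᶠ t in l, dist t t₀ < δ := by
    have h : ∀ᶠ t in 𝓝 t₀, dist t t₀ < δ := by
      filter_upwards [Metric.ball_mem_nhds t₀ hδ0] with t ht
      exact ht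
    exact h.filter_mono nhdsWithin_le_nhds
  have hevK : ∀ᶠ t in l, t ∈ K := by
    filter_upwards [hevIcc, hevdist] with t h1 h2 using hmemK t h1 h2
  have hlim : ∀ s : ℝ, s < t₀ → ContinuousOn (fun t => F t s) (Set.Icc 0 T \ {s}) →
      Filter.Tendsto (fun t => F t s) l (𝓝 (F t₀ s)) := by
    intro s hs hcs
    have hne : t₀ ≠ s := fun h => absurd (h ▸ hs) (lt_irrefl _)
    have hmem : t₀ ∈ Set.Icc 0 T \ {s} := ⟨ht₀, by simpa using hne⟩
    have hcw := hcs t₀ hmem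
    have heq : nhdsWithin t₀ (Set.Icc 0 T \ {s}) = l := by
      rw [hl, Set.diff_eq]
      exact nhdsWithin_inter_of_mem' (mem_nhdsWithin_of_mem_nhds
        (isOpen_compl_singleton.mem_nhds (by simpa using hne)))
    rw [← heq]
    exact hcw
  have hTA : Filter.Tendsto (fun t => ∫ s in Set.Iic (t₀ - 2*ε), F t s) l
      (𝓝 (∫ s in Set.Iic (t₀ - 2*ε), F t₀ s)) := by
    apply MeasureTheory.tendsto_integral_filter_of_dominated_convergence
      (bound := fun s => ⨆ r : K, ‖F (r:ℝ) s‖)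
    · filter_upwards [hevIcc] with t ht
      exact (hInt t ht).aestronglyMeasurable.restrict
    · filter_upwards [hevK] with t htK
      filter_upwards [ae_restrict_of_ae hCont, ae_restrict_mem measurableSet_Iic]
        with s hcs hsmem
      have hsle : s ≤ t₀ - 2*ε := hsmem
      have hsK : ∀ r ∈ K, r ∈ Set.Icc 0 T \ {s} := by
        intro r hr
        have h1 : t₀ - ε ≤ r := le_trans (le_max_right _ _) hr.1
        refine ⟨hKsub hr, ?_⟩
        simp only [Set.mem_singleton_iff]
        intro h
        rw [h] at h1
        linarith
      have hcK : ContinuousOn (fun r => ‖F r s‖) K :=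
        (hcs.mono hsK).norm
      have hbdd : BddAbove (Set.range fun r : K => ‖F (r:ℝ) s‖) := by
        have := (isCompact_Icc.image_of_continuousOn hcK).bddAbove
        rwa [Set.image_eq_range] at this
      exact le_ciSup hbdd ⟨t, htK⟩
    · exact hsupInt
    · filter_upwards [ae_restrict_of_ae hCont, ae_restrict_mem measurableSet_Iic]
        with s hcs hsmem
      have hsle : s ≤ t₀ - 2*ε := hsmem
      exact hlim s (by linarith) hcs
  have hTB : Filter.Tendsto (fun t => ∫ s in Set.Ioc (t₀ - 2*ε) (t₀ - 2*δ), F t s) l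
      (𝓝 (∫ s in Set.Ioc (t₀ - 2*ε) (t₀ - 2*δ), F t₀ s)) := by
    apply MeasureTheory.tendsto_integral_filter_of_dominated_convergence
      (bound := fun s => C * δ ^ (-γ) * |s| ^ (-β))
    · filter_upwards [hevIcc] with t ht
      exact (hInt t ht).aestronglyMeasurable.restrict
    · filter_upwards [hevK, hevdist] with t htK htd
      filter_upwards [ae_restrict_mem measurableSet_Ioc] with s hsmem
      rw [Real.dist_eq, abs_lt] at htd
      have hs1 : t₀ - 2*ε ≤ s := hsmem.1.le
      have hs2 : s < t := by linarith [hsmem.2, htd.1]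
      have hb := hbound t htK s ⟨hs1, hs2⟩
      refine hb.trans ?_
      have h1 : |t - s| ^ (-γ) ≤ δ ^ (-γ) := by
        rw [abs_of_pos (by linarith : (0:ℝ) < t - s)]
        exact Real.rpow_le_rpow_of_nonpos hδ0 (by linarith [hsmem.2, htd.1]) (by linarith)
      calc C * |s| ^ (-β) * |t - s| ^ (-γ) ≤ C * |s| ^ (-β) * δ ^ (-γ) :=
            mul_le_mul_of_nonneg_left h1 (by positivity)
        _ = C * δ ^ (-γ) * |s| ^ (-β) := by ring
    · exact (aux_int hβ1 _ _).const_mul _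
    · filter_upwards [ae_restrict_of_ae hCont, ae_restrict_mem measurableSet_Ioc]
        with s hcs hsmem
      exact hlim s (by linarith [hsmem.2]) hcs
  have hsplit : ∀ u ∈ Set.Icc 0 T, (∫ s in Set.Iic (t₀ - 2*δ), F u s)
      = (∫ s in Set.Iic (t₀ - 2*ε), F u s)
        + ∫ s in Set.Ioc (t₀ - 2*ε) (t₀ - 2*δ), F u s := by
    intro u hu
    rw [← setIntegral_union (Set.Iic_disjoint_Ioc le_rfl) measurableSet_Ioc
      ((hInt u hu).integrableOn) ((hInt u hu).integrableOn),
      Set.Iic_union_Ioc_eq_Iic (by linarith : t₀ - 2*ε ≤ t₀ - 2*δ)]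
  have hGC : ContinuousWithinAt (fun t => ∫ s in Set.Iic (t₀ - 2*δ), F t s)
      (Set.Icc 0 T) t₀ := by
    show Filter.Tendsto _ l (𝓝 (∫ s in Set.Iic (t₀ - 2*δ), F t₀ s))
    rw [hsplit t₀ ht₀]
    exact Filter.Tendsto.congr' (hevIcc.mono fun u hu => (hsplit u hu).symm) (hTA.add hTB)
  obtain ⟨δ₂, hδ₂0, hG⟩ := Metric.continuousWithinAt_iff.mp hGC (η/3) (by positivity)
  -- ## Conclusion
  refine ⟨min δ δ₂, by positivity, fun t htIcc htd => ?_⟩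
  have hd1 : dist t t₀ < δ := lt_of_lt_of_le htd (min_le_left _ _)
  have hd2 : dist t t₀ < δ₂ := lt_of_lt_of_le htd (min_le_right _ _)
  have hdec : ∀ u ∈ Set.Icc 0 T, dist u t₀ < δ → (∫ s in Set.Iic u, F u s)
      = (∫ s in Set.Iic (t₀ - 2*δ), F u s) + ∫ s in Set.Ioc (t₀ - 2*δ) u, F u s := by
    intro u hu hdu
    rw [Real.dist_eq, abs_lt] at hdu
    rw [← setIntegral_union (Set.Iic_disjoint_Ioc le_rfl) measurableSet_Ioc
      ((hInt u hu).integrableOn) ((hInt u hu).integrableOn),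
      Set.Iic_union_Ioc_eq_Iic (by linarith [hdu.1] : t₀ - 2*δ ≤ u)]
  have hdist0 : dist t₀ t₀ < δ := by simpa using hδ0
  have e1 := hdec t htIcc hd1
  have e2 := hdec t₀ ht₀ hdist0
  have hGd := hG htIcc hd2
  have ht1 := htail t htIcc hd1
  have ht2 := htail t₀ ht₀ hdist0
  show dist (∫ s in Set.Iic t, F t s) (∫ s in Set.Iic t₀, F t₀ s) < η
  rw [e1, e2]
  calc dist ((∫ s in Set.Iic (t₀ - 2*δ), F t s) + ∫ s in Set.Ioc (t₀ - 2*δ) t, F t s)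
        ((∫ s in Set.Iic (t₀ - 2*δ), F t₀ s) + ∫ s in Set.Ioc (t₀ - 2*δ) t₀, F t₀ s)
      ≤ dist (∫ s in Set.Iic (t₀ - 2*δ), F t s) (∫ s in Set.Iic (t₀ - 2*δ), F t₀ s)
        + dist (∫ s in Set.Ioc (t₀ - 2*δ) t, F t s) (∫ s in Set.Ioc (t₀ - 2*δ) t₀, F t₀ s) :=
        dist_add_add_le _ _ _ _
    _ ≤ dist (∫ s in Set.Iic (t₀ - 2*δ), F t s) (∫ s in Set.Iic (t₀ - 2*δ), F t₀ s)
        + (‖∫ s in Set.Ioc (t₀ - 2*δ) t, F t s‖ + ‖∫ s in Set.Ioc (t₀ - 2*δ) t₀, F t₀ s‖) := by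
        refine add_le_add le_rfl ?_
        rw [dist_eq_norm]
        exact norm_sub_le _ _
    _ < η/3 + (η/3 + η/3) := by
        apply add_lt_add hGd (add_lt_add ht1 ht2)
    _ = η := by ring
end

section
/- Let τ ∈ [-∞, 0], T > 0, β, γ ∈ (0,1) with β + γ < 1, and let F : ℝ² → ℂ satisfy: F(t,·) ∈ L¹(ds) for every t ∈ [0,T]; F is continuous on {(t,s) : τ ≤ s ≤ t}; for Lebesgue-a.e. s the map t ↦ F(t,s) is continuously differentiable on [0,T] \ {s}; and for every t ∈ [0,T] there exist ε > 0 and C > 0 such that ∫_{-∞}^{t-2ε} sup_{r ∈ [max(0,t-ε), min(t+ε,T)]} |∂F/∂r (r,s)| ds < ∞ and |∂F/∂r (r,s)| ≤ C |s|^{-β} |r-s|^{-γ} for all r ∈ [max(0,t-ε), min(t+ε,T)] and s ∈ [t-2ε, r). Then I_F(t) := ∫_{-∞}^t F(t,s) ds is continuously differentiable on [0,T] with derivative I_F'(t) = F(t,t) + ∫_{-∞}^t ∂F/∂t (t,s) ds. -/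
open Real MeasureTheory Set

open Filter Topology intervalIntegral

lemma real_rpow_add_le {x y p : ℝ} (hx : 0 ≤ x) (hy : 0 ≤ y) (hp : 0 ≤ p) (hp1 : p ≤ 1) :
    (x + y) ^ p ≤ x ^ p + y ^ p := by
  have h := NNReal.rpow_add_le_add_rpow x.toNNReal y.toNNReal hp hp1
  have h2 := NNReal.coe_le_coe.2 h
  push_cast [NNReal.coe_rpow] at h2
  rwa [Real.coe_toNNReal x hx, Real.coe_toNNReal y hy] at h2

lemma real_rpow_sub_le {a b p : ℝ} (ha : 0 ≤ a) (hab : a ≤ b) (hp : 0 ≤ p) (hp1 : p ≤ 1) :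
    b ^ p - a ^ p ≤ (b - a) ^ p := by
  have h := real_rpow_add_le (x := b - a) (y := a) (by linarith) ha hp hp1
  rw [sub_add_cancel] at h
  linarith

lemma abs_rpow_intervalIntegrable {θ : ℝ} (hθ1 : θ < 1) (a b : ℝ) :
    IntervalIntegrable (fun s => |s| ^ (-θ)) volume a b := by
  have key : ∀ M : ℝ, 0 ≤ M → IntervalIntegrable (fun s => |s| ^ (-θ)) volume 0 M := by
    intro M hM
    rw [intervalIntegrable_iff, uIoc_of_le hM]
    have h := (intervalIntegrable_rpow' (a := 0) (b := M) (r := -θ) (by linarith))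
    rw [intervalIntegrable_iff, uIoc_of_le hM] at h
    exact h.congr_fun (fun s hs => by rw [abs_of_pos hs.1]) measurableSet_Ioc
  have keyneg : ∀ M : ℝ, 0 ≤ M → IntervalIntegrable (fun s => |s| ^ (-θ)) volume (-M) 0 := by
    intro M hM
    have h := (IntervalIntegrable.iff_comp_neg).mp (key M hM)
    simp only [abs_neg] at h
    simpa using h.symm
  have all : ∀ x : ℝ, IntervalIntegrable (fun s => |s| ^ (-θ)) volume 0 x := by
    intro x
    rcases le_or_gt 0 x with hx | hx
    · exact key x hx
    · have := (keyneg (-x) (by linarith)).symm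
      simpa using this
  exact (all a).symm.trans (all b)

lemma integral_abs_rpow_eval {θ : ℝ} (hθ0 : 0 < θ) (hθ1 : θ < 1) {b : ℝ} (hb : 0 ≤ b) :
    ∫ u in (0:ℝ)..b, |u| ^ (-θ) = b ^ (1 - θ) / (1 - θ) := by
  have h : ∫ u in (0:ℝ)..b, |u| ^ (-θ) = ∫ u in (0:ℝ)..b, u ^ (-θ) := by
    apply intervalIntegral.integral_congr
    intro u hu
    rw [uIcc_of_le hb] at hu
    show |u| ^ (-θ) = u ^ (-θ)
    rw [abs_of_nonneg hu.1]
  rw [h, integral_rpow (Or.inl (by linarith))]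
  rw [Real.zero_rpow (by intro h'; linarith : -θ + 1 ≠ 0), show -θ + 1 = 1 - θ by ring, sub_zero]

lemma integral_abs_rpow_pos_le {θ : ℝ} (hθ0 : 0 < θ) (hθ1 : θ < 1) {x y : ℝ}
    (hx : 0 ≤ x) (hxy : x ≤ y) :
    ∫ u in x..y, |u| ^ (-θ) ≤ (y - x) ^ (1 - θ) / (1 - θ) := by
  have h1θ : (0:ℝ) < 1 - θ := by linarith
  have hsplit := intervalIntegral.integral_interval_sub_left
    (abs_rpow_intervalIntegrable hθ1 0 y) (abs_rpow_intervalIntegrable hθ1 0 x)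
  rw [← hsplit, integral_abs_rpow_eval hθ0 hθ1 (hx.trans hxy), integral_abs_rpow_eval hθ0 hθ1 hx]
  rw [div_sub_div_same]
  have hnum := real_rpow_sub_le (p := 1 - θ) hx hxy (by linarith) (by linarith)
  exact div_le_div_of_nonneg_right hnum h1θ.le  

lemma integral_abs_reflect {θ : ℝ} (a b : ℝ) :
    ∫ u in a..b, |u| ^ (-θ) = ∫ u in (-b)..(-a), |u| ^ (-θ) := by
  have h : ∀ u : ℝ, |u| ^ (-θ) = |(-u)| ^ (-θ) := fun u => by rw [abs_neg]
  calc ∫ u in a..b, |u| ^ (-θ) = ∫ u in a..b, |(-u)| ^ (-θ) := by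
        simp only [← h]
    _ = ∫ u in (-b)..(-a), |u| ^ (-θ) := intervalIntegral.integral_comp_neg (fun u => |u| ^ (-θ))

lemma integrableOn_kernel {θ : ℝ} (hθ1 : θ < 1) (c a b : ℝ) :
    IntegrableOn (fun s => |s - c| ^ (-θ)) (Ioc a b) volume := by
  rcases le_or_gt a b with hab | hab
  · have h := (abs_rpow_intervalIntegrable hθ1 (a - c) (b - c)).comp_sub_right c
    rw [intervalIntegrable_iff] at h
    simp only [sub_add_cancel] at h
    rwa [uIoc_of_le hab] at h
  · simp [Ioc_eq_empty (by linarith : ¬ a < b), integrableOn_empty]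

lemma integral_kernel_le {θ : ℝ} (hθ0 : 0 < θ) (hθ1 : θ < 1) (c : ℝ) {a b : ℝ} (hab : a ≤ b) :
    ∫ s in Ioc a b, |s - c| ^ (-θ) ≤ 2 * ((b - a) ^ (1 - θ) / (1 - θ)) := by
  have h1θ : (0:ℝ) < 1 - θ := by linarith
  have hKnn : (0:ℝ) ≤ (b - a) ^ (1 - θ) / (1 - θ) :=
    div_nonneg (Real.rpow_nonneg (by linarith) _) h1θ.le
  have hshift : ∫ s in Ioc a b, |s - c| ^ (-θ) = ∫ u in (a - c)..(b - c), |u| ^ (-θ) := by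
    have h := intervalIntegral.integral_comp_sub_right (a := a) (b := b) (fun u => |u| ^ (-θ)) c
    rw [intervalIntegral.integral_of_le hab] at h
    exact h
  rw [hshift]
  set A := a - c with hA
  set B := b - c with hB
  have hAB : A ≤ B := by simp only [hA, hB]; linarith
  have hlen : B - A = b - a := by simp only [hA, hB]; ring
  rcases le_or_gt 0 A with h0A | h0A
  · have := integral_abs_rpow_pos_le hθ0 hθ1 h0A hAB
    rw [hlen] at this
    linarith
  rcases le_or_gt B 0 with hB0 | hB0
  · rw [integral_abs_reflect]
    have := integral_abs_rpow_pos_le hθ0 hθ1 (by linarith : (0:ℝ) ≤ -B) (by linarith : -B ≤ -A)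
    have hlen2 : -A - -B = b - a := by simp only [hA, hB]; ring
    rw [hlen2] at this
    linarith
  · have hsplit := intervalIntegral.integral_add_adjacent_intervals
      (abs_rpow_intervalIntegrable hθ1 A 0) (abs_rpow_intervalIntegrable hθ1 0 B)
    rw [← hsplit]
    have h2 := integral_abs_rpow_pos_le hθ0 hθ1 le_rfl hB0.le
    rw [sub_zero] at h2
    have h1 : ∫ u in A..(0:ℝ), |u| ^ (-θ) ≤ (-A) ^ (1 - θ) / (1 - θ) := by
      rw [integral_abs_reflect]
      have := integral_abs_rpow_pos_le hθ0 hθ1 le_rfl (by linarith : (0:ℝ) ≤ -A)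
      simpa using this
    have hm1 : (-A) ^ (1 - θ) ≤ (b - a) ^ (1 - θ) :=
      Real.rpow_le_rpow (by linarith) (by linarith) h1θ.le
    have hm2 : B ^ (1 - θ) ≤ (b - a) ^ (1 - θ) :=
      Real.rpow_le_rpow (by linarith) (by linarith) h1θ.le
    have := div_le_div_of_nonneg_right hm1 h1θ.le
    have := div_le_div_of_nonneg_right hm2 h1θ.le
    linarith

lemma kernel_compare {β γ u v : ℝ} (hβ : 0 < β) (hγ : 0 < γ) (hu : 0 ≤ u) (hv : 0 ≤ v) :
    u ^ (-β) * v ^ (-γ) ≤ u ^ (-(β + γ)) + v ^ (-(β + γ)) := by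
  rcases eq_or_lt_of_le hu with h0 | hu'
  · rw [← h0, Real.zero_rpow (neg_ne_zero.mpr hβ.ne'), zero_mul]
    positivity
  rcases eq_or_lt_of_le hv with h0 | hv'
  · rw [← h0, Real.zero_rpow (neg_ne_zero.mpr hγ.ne'), mul_zero]
    positivity
  rcases le_total u v with h | h
  · have h1 : v ^ (-γ) ≤ u ^ (-γ) := Real.rpow_le_rpow_of_nonpos hu' h (by linarith)
    have h2 : u ^ (-β) * v ^ (-γ) ≤ u ^ (-β) * u ^ (-γ) :=
      mul_le_mul_of_nonneg_left h1 (Real.rpow_nonneg hu _)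
    rw [← Real.rpow_add hu', show -β + -γ = -(β + γ) by ring] at h2
    exact h2.trans (le_add_of_nonneg_right (Real.rpow_nonneg hv _))
  · have h1 : u ^ (-β) ≤ v ^ (-β) := Real.rpow_le_rpow_of_nonpos hv' h (by linarith)
    have h2 : u ^ (-β) * v ^ (-γ) ≤ v ^ (-β) * v ^ (-γ) :=
      mul_le_mul_of_nonneg_right h1 (Real.rpow_nonneg hv _)
    rw [← Real.rpow_add hv', show -β + -γ = -(β + γ) by ring] at h2
    exact h2.trans (le_add_of_nonneg_left (Real.rpow_nonneg hu _))

lemma aesm_F' {T : ℝ} {F F' : ℝ → ℝ → ℂ}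
    (hInt : ∀ t ∈ Set.Icc 0 T, Integrable (F t) (volume : Measure ℝ))
    (hDeriv : ∀ᵐ s ∂(volume : Measure ℝ),
      (∀ t ∈ Set.Icc 0 T \ {s}, HasDerivAt (fun r => F r s) (F' t s) t) ∧
      ContinuousOn (fun t => F' t s) (Set.Icc 0 T \ {s}))
    (hT : 0 < T) {t : ℝ} (ht : t ∈ Set.Icc 0 T) :
    AEStronglyMeasurable (F' t) (volume : Measure ℝ) := by
  classical
  by_cases hlt : t < T
  case pos =>
    set u : ℕ → ℝ := fun n => t + (T - t) / (n + 1) with hu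
    have hmem : ∀ n : ℕ, u n ∈ Set.Icc 0 T ∧ u n ≠ t := by
      intro n
      have hn : (0:ℝ) < (n:ℝ) + 1 := by positivity
      have hpos : 0 < (T - t) / ((n:ℝ) + 1) := by
        apply div_pos (by linarith) hn
      have hle : (T - t) / ((n:ℝ) + 1) ≤ T - t := by
        apply div_le_self (by linarith) (by linarith)
      refine ⟨⟨by simp only [hu]; linarith [ht.1], by simp only [hu]; linarith⟩, ?_⟩
      simp only [hu]
      intro h
      nlinarith
    have hconv : Filter.Tendsto u Filter.atTop (𝓝 t) := by
      have h1 : Filter.Tendsto (fun n : ℕ => (T - t) * (1 / ((n:ℝ) + 1))) Filter.atTop (𝓝 ((T - t) * 0)) :=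
        tendsto_const_nhds.mul tendsto_one_div_add_atTop_nhds_zero_nat
      simp only [mul_zero, mul_one_div] at h1
      have h2 := Filter.Tendsto.const_add t h1
      simp only [add_zero] at h2
      exact h2
    have haesm : ∀ n : ℕ, AEStronglyMeasurable
        (fun s => ((u n - t)⁻¹ : ℝ) • (F (u n) s - F t s)) (volume : Measure ℝ) :=
      fun n => (((hInt (u n) (hmem n).1).sub (hInt t ht)).aestronglyMeasurable.const_smul ((u n - t)⁻¹ : ℝ))
    apply aestronglyMeasurable_of_tendsto_ae Filter.atTop haesm
    have hne : ∀ᵐ s : ℝ ∂(volume : Measure ℝ), s ≠ t := by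
      rw [MeasureTheory.ae_iff]
      simp only [not_not]
      simpa [Set.setOf_eq_eq_singleton] using measure_singleton t
    filter_upwards [hDeriv, hne] with s hs hst
    have hd := hs.1 t ⟨ht, by simp only [Set.mem_singleton_iff]; exact fun h => hst h.symm⟩
    have hslope := hasDerivAt_iff_tendsto_slope.mp hd
    have hseq : Filter.Tendsto u Filter.atTop (𝓝[≠] t) :=
      tendsto_nhdsWithin_of_tendsto_nhds_of_eventually_within u hconv
        (Filter.Eventually.of_forall fun n => (hmem n).2)
    have := hslope.comp hseq
    apply this.congr
    intro n
    simp [slope_def_module]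
  case neg =>
    have htT : t = T := le_antisymm ht.2 (not_lt.mp hlt)
    set u : ℕ → ℝ := fun n => t - T / (n + 1) with hu
    have hmem : ∀ n : ℕ, u n ∈ Set.Icc 0 T ∧ u n ≠ t := by
      intro n
      have hn : (0:ℝ) < (n:ℝ) + 1 := by positivity
      have hpos : 0 < T / ((n:ℝ) + 1) := div_pos hT hn
      have hle : T / ((n:ℝ) + 1) ≤ T := div_le_self hT.le (by linarith)
      refine ⟨⟨by simp only [hu, htT]; linarith, by simp only [hu]; linarith [ht.2]⟩, ?_⟩
      simp only [hu]
      intro h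
      nlinarith
    have hconv : Filter.Tendsto u Filter.atTop (𝓝 t) := by
      have h1 : Filter.Tendsto (fun n : ℕ => T * (1 / ((n:ℝ) + 1))) Filter.atTop (𝓝 (T * 0)) :=
        tendsto_const_nhds.mul tendsto_one_div_add_atTop_nhds_zero_nat
      simp only [mul_zero, mul_one_div] at h1
      have h2 := Filter.Tendsto.const_sub t h1
      simp only [sub_zero] at h2
      exact h2
    have haesm : ∀ n : ℕ, AEStronglyMeasurable
        (fun s => ((u n - t)⁻¹ : ℝ) • (F (u n) s - F t s)) (volume : Measure ℝ) :=
      fun n => (((hInt (u n) (hmem n).1).sub (hInt t ht)).aestronglyMeasurable.const_smul ((u n - t)⁻¹ : ℝ))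
    apply aestronglyMeasurable_of_tendsto_ae Filter.atTop haesm
    have hne : ∀ᵐ s : ℝ ∂(volume : Measure ℝ), s ≠ t := by
      rw [MeasureTheory.ae_iff]
      simp only [not_not]
      simpa [Set.setOf_eq_eq_singleton] using measure_singleton t
    filter_upwards [hDeriv, hne] with s hs hst
    have hd := hs.1 t ⟨ht, by simp only [Set.mem_singleton_iff]; exact fun h => hst h.symm⟩
    have hslope := hasDerivAt_iff_tendsto_slope.mp hd
    have hseq : Filter.Tendsto u Filter.atTop (𝓝[≠] t) :=
      tendsto_nhdsWithin_of_tendsto_nhds_of_eventually_within u hconv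
        (Filter.Eventually.of_forall fun n => (hmem n).2)
    have := hslope.comp hseq
    apply this.congr
    intro n
    simp [slope_def_module]

lemma le_csSup_F' {T ε t₀ s : ℝ} {F' : ℝ → ℝ → ℂ} (hε : 0 < ε)
    (hs : s ≤ t₀ - 2 * ε)
    (hcont : ContinuousOn (fun t => F' t s) (Set.Icc 0 T \ {s}))
    {r : ℝ} (hr : r ∈ Set.Icc (max 0 (t₀ - ε)) (min (t₀ + ε) T)) :
    ‖F' r s‖ ≤
      ⨆ r' : Set.Icc (max 0 (t₀ - ε)) (min (t₀ + ε) T), ‖F' (r' : ℝ) s‖ := by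
  set J := Set.Icc (max 0 (t₀ - ε)) (min (t₀ + ε) T) with hJ
  have hJsub : J ⊆ Set.Icc 0 T \ {s} := by
    intro x hx
    refine ⟨⟨le_trans (le_max_left _ _) hx.1, le_trans hx.2 (min_le_right _ _)⟩, ?_⟩
    simp only [Set.mem_singleton_iff]
    intro hxs
    have h1 : t₀ - ε ≤ x := le_trans (le_max_right _ _) hx.1
    rw [hxs] at h1
    linarith
  have hcont2 : ContinuousOn (fun r' => ‖F' r' s‖) J :=
    continuous_norm.comp_continuousOn (hcont.mono hJsub)
  have hbdd : BddAbove ((fun r' => ‖F' r' s‖) '' J) :=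
    (isCompact_Icc.image_of_continuousOn hcont2).bddAbove
  have hbdd2 : BddAbove (Set.range fun r' : J => ‖F' (r' : ℝ) s‖) := by
    have heq : (Set.range fun r' : J => ‖F' (r' : ℝ) s‖)
        = (fun r' => ‖F' r' s‖) '' J := by
      ext y
      simp [Set.mem_image, Subtype.exists]
    rwa [heq]
  exact le_ciSup hbdd2 ⟨r, hr⟩

lemma ker_bound' {β γ C x s r : ℝ} (hβ0 : 0 < β) (hγ0 : 0 < γ) (hC : 0 ≤ C)
    (h : x ≤ C * |s| ^ (-β) * |r - s| ^ (-γ)) :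
    x ≤ C * (|s - 0| ^ (-(β + γ)) + |s - r| ^ (-(β + γ))) := by
  have h2 := kernel_compare (u := |s|) (v := |r - s|) hβ0 hγ0 (abs_nonneg _) (abs_nonneg _)
  rw [sub_zero, abs_sub_comm s r]
  calc x ≤ C * |s| ^ (-β) * |r - s| ^ (-γ) := h
    _ = C * (|s| ^ (-β) * |r - s| ^ (-γ)) := by ring
    _ ≤ C * (|s| ^ (-(β + γ)) + |r - s| ^ (-(β + γ))) := mul_le_mul_of_nonneg_left h2 hC

lemma integrableOn_ker_sum {θ : ℝ} (C : ℝ) (hθ1 : θ < 1) (r a b : ℝ) :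
    IntegrableOn (fun s => C * (|s - 0| ^ (-θ) + |s - r| ^ (-θ))) (Ioc a b) volume :=
  ((integrableOn_kernel hθ1 0 a b).add (integrableOn_kernel hθ1 r a b)).const_mul C

lemma integral_ker_sum_le {θ C : ℝ} (hθ0 : 0 < θ) (hθ1 : θ < 1) (hC : 0 ≤ C) (r : ℝ) {a b : ℝ}
    (hab : a ≤ b) :
    ∫ s in Ioc a b, C * (|s - 0| ^ (-θ) + |s - r| ^ (-θ))
      ≤ C * (4 * ((b - a) ^ (1 - θ) / (1 - θ))) := by
  rw [MeasureTheory.integral_const_mul]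
  apply mul_le_mul_of_nonneg_left _ hC
  rw [MeasureTheory.integral_add (integrableOn_kernel hθ1 0 a b) (integrableOn_kernel hθ1 r a b)]
  have h1 := integral_kernel_le hθ0 hθ1 0 hab
  have h2 := integral_kernel_le hθ0 hθ1 r hab
  linarith

set_option maxHeartbeats 1000000 in
theorem differentiability_of_volterra_integral
    (T : ℝ) (hT : 0 < T) (τ : ℝ) (hτ : τ ≤ 0) (β γ : ℝ)
    (hβ : β ∈ Set.Ioo (0 : ℝ) 1) (hγ : γ ∈ Set.Ioo (0 : ℝ) 1) (hβγ : β + γ < 1)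
    (F F' : ℝ → ℝ → ℂ)
    (hInt : ∀ t ∈ Set.Icc 0 T, Integrable (F t) (volume : Measure ℝ))
    (hContF : ContinuousOn (fun p : ℝ × ℝ => F p.1 p.2)
      {p : ℝ × ℝ | τ ≤ p.2 ∧ p.2 ≤ p.1})
    (hDeriv : ∀ᵐ s ∂(volume : Measure ℝ),
      (∀ t ∈ Set.Icc 0 T \ {s}, HasDerivAt (fun r => F r s) (F' t s) t) ∧
      ContinuousOn (fun t => F' t s) (Set.Icc 0 T \ {s}))
    (hLoc : ∀ t ∈ Set.Icc 0 T, ∃ ε > (0 : ℝ), ∃ C > (0 : ℝ),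
      (IntegrableOn
        (fun s => ⨆ r : Set.Icc (max 0 (t - ε)) (min (t + ε) T),
          ‖F' (r : ℝ) s‖)
        (Set.Iic (t - 2 * ε)) (volume : Measure ℝ)) ∧
      (∀ r ∈ Set.Icc (max 0 (t - ε)) (min (t + ε) T), ∀ s ∈ Set.Ico (t - 2 * ε) r,
        ‖F' r s‖ ≤ C * |s| ^ (-β) * |r - s| ^ (-γ))) :
    (∀ t ∈ Set.Icc 0 T,
      HasDerivWithinAt (fun t => ∫ s in Set.Iic t, F t s)
        (F t t + ∫ s in Set.Iic t, F' t s) (Set.Icc 0 T) t) ∧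
    ContinuousOn (fun t => F t t + ∫ s in Set.Iic t, F' t s) (Set.Icc 0 T) := by
  obtain ⟨hβ0, hβ1⟩ := hβ
  obtain ⟨hγ0, hγ1⟩ := hγ
  have hθ0 : 0 < β + γ := by linarith
  have hθ1 : β + γ < 1 := hβγ
  have hmeas : ∀ t ∈ Set.Icc 0 T, AEStronglyMeasurable (F' t) (volume : Measure ℝ) :=
    fun t ht => aesm_F' hInt hDeriv hT ht
  have hne : ∀ t : ℝ, ∀ᵐ s : ℝ ∂(volume : Measure ℝ), s ≠ t := by
    intro t
    rw [MeasureTheory.ae_iff]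
    simp only [not_not]
    simpa [Set.setOf_eq_eq_singleton] using measure_singleton t
  have hintF' : ∀ t ∈ Set.Icc 0 T, IntegrableOn (F' t) (Set.Iic t) volume := by
    intro t ht
    obtain ⟨ε, hε, C, hC, hSup, hKer⟩ := hLoc t ht
    set c := t - 2 * ε with hc
    have htJ : t ∈ Set.Icc (max 0 (t - ε)) (min (t + ε) T) :=
      ⟨max_le ht.1 (by linarith), le_min (by linarith) ht.2⟩
    have h1 : IntegrableOn (F' t) (Set.Iic c) volume := by
      apply Integrable.mono hSup ((hmeas t ht).restrict)
      rw [ae_restrict_iff' measurableSet_Iic]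
      filter_upwards [hDeriv] with s hs hsc
      have hle := le_csSup_F' hε hsc hs.2 htJ
      exact hle.trans (le_abs_self _)
    have h2 : IntegrableOn (F' t) (Set.Ioc c t) volume := by
      apply Integrable.mono (integrableOn_ker_sum C hθ1 t c t) ((hmeas t ht).restrict)
      rw [ae_restrict_iff' measurableSet_Ioc]
      filter_upwards [hne t] with s hst hsmem
      have hb := hKer t htJ s ⟨hsmem.1.le, lt_of_le_of_ne hsmem.2 hst⟩
      exact (ker_bound' hβ0 hγ0 hC.le hb).trans (le_abs_self _)
    have h3 := h1.union h2
    rwa [Set.Iic_union_Ioc_eq_Iic (by linarith : c ≤ t)] at h3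
  have hcontInt : ContinuousOn (fun t => ∫ s in Set.Iic t, F' t s) (Set.Icc 0 T) := by
    intro t₀ ht₀
    obtain ⟨ε, hε, C, hC, hSup, hKer⟩ := hLoc t₀ ht₀
    set c := t₀ - 2 * ε with hc
    set J := Set.Icc (max 0 (t₀ - ε)) (min (t₀ + ε) T) with hJdef
    have ht₀J : t₀ ∈ J := ⟨max_le ht₀.1 (by linarith), le_min (by linarith) ht₀.2⟩
    have hJmem : ∀ t ∈ Set.Icc 0 T, |t - t₀| ≤ ε → t ∈ J := by
      intro t ht hd
      rw [abs_le] at hd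
      exact ⟨max_le ht.1 (by linarith [hd.1]), le_min (by linarith [hd.2]) ht.2⟩
    rw [ContinuousWithinAt, Metric.tendsto_nhds]
    intro δ hδ
    -- choose η
    have hcont0 : Filter.Tendsto (fun x : ℝ => C * (4 * (x ^ (1 - (β + γ)) / (1 - (β + γ)))))
        (𝓝[>] (0:ℝ)) (𝓝 0) := by
      have h1 : ContinuousAt (fun x : ℝ => x ^ (1 - (β + γ))) 0 :=
        Real.continuousAt_rpow_const 0 _ (Or.inr (by linarith))
      have h2 := h1.tendsto
      rw [Real.zero_rpow (by linarith : 1 - (β + γ) ≠ 0)] at h2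
      have h3 := ((h2.div_const (1 - (β + γ))).const_mul 4).const_mul C
      simp only [zero_div, mul_zero] at h3
      exact h3.mono_left nhdsWithin_le_nhds
    have hev1 : ∀ᶠ x in 𝓝[>] (0:ℝ),
        C * (4 * (x ^ (1 - (β + γ)) / (1 - (β + γ)))) < δ / 4 :=
      hcont0.eventually_lt_const (by linarith)
    have hev2 : ∀ᶠ x in 𝓝[>] (0:ℝ), x < ε :=
      Filter.Eventually.filter_mono nhdsWithin_le_nhds (eventually_lt_nhds hε)
    obtain ⟨x, hxδ, hxε, hx0⟩ := (hev1.and (hev2.and self_mem_nhdsWithin)).exists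
    set η := x / 2 with hηdef
    have hη0 : 0 < η := by simp only [hηdef]; exact half_pos hx0
    have hηε : η < ε := by simp only [hηdef]; linarith
    have hηδ : C * (4 * ((2 * η) ^ (1 - (β + γ)) / (1 - (β + γ)))) < δ / 4 := by
      have : 2 * η = x := by simp only [hηdef]; ring
      rwa [this]
    have hcη : c ≤ t₀ - η := by simp only [hc]; linarith
    -- tail bound
    have htail : ∀ r, r ∈ J → r ∈ Set.Icc 0 T → t₀ - η ≤ r →
        ‖∫ s in Set.Ioc (t₀ - η) r, F' r s‖
          ≤ C * (4 * ((r - (t₀ - η)) ^ (1 - (β + γ)) / (1 - (β + γ)))) := by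
      intro r hrJ hrI hrge
      have hin : IntegrableOn (F' r) (Set.Ioc (t₀ - η) r) volume :=
        (hintF' r hrI).mono_set Set.Ioc_subset_Iic_self
      calc ‖∫ s in Set.Ioc (t₀ - η) r, F' r s‖
          ≤ ∫ s in Set.Ioc (t₀ - η) r, ‖F' r s‖ := norm_integral_le_integral_norm _
        _ ≤ ∫ s in Set.Ioc (t₀ - η) r, C * (|s - 0| ^ (-(β + γ)) + |s - r| ^ (-(β + γ))) := by
            apply MeasureTheory.integral_mono_ae hin.norm
              (integrableOn_ker_sum C hθ1 r (t₀ - η) r)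
            rw [Filter.EventuallyLE, ae_restrict_iff' measurableSet_Ioc]
            filter_upwards [hne r] with s hsr hsmem
            have hb := hKer r hrJ s ⟨le_trans hcη hsmem.1.le, lt_of_le_of_ne hsmem.2 hsr⟩
            exact ker_bound' hβ0 hγ0 hC.le hb
        _ ≤ C * (4 * ((r - (t₀ - η)) ^ (1 - (β + γ)) / (1 - (β + γ)))) :=
            integral_ker_sum_le hθ0 hθ1 hC.le r hrge
    -- middle DCT
    have hmid : Filter.Tendsto (fun t => ∫ s in Set.Iic (t₀ - η), F' t s) (𝓝[Set.Icc 0 T] t₀)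
        (𝓝 (∫ s in Set.Iic (t₀ - η), F' t₀ s)) := by
      apply MeasureTheory.tendsto_integral_filter_of_dominated_convergence
        (bound := fun s => if s ≤ c then (⨆ r : J, ‖F' (r : ℝ) s‖)
          else C * (|s - 0| ^ (-(β + γ)) + (η / 2) ^ (-(β + γ))))
      · filter_upwards [eventually_mem_nhdsWithin] with t ht
        exact (hmeas t ht).restrict
      · have hevd : ∀ᶠ t in 𝓝[Set.Icc 0 T] t₀, |t - t₀| < η / 2 := by
          apply Filter.Eventually.filter_mono nhdsWithin_le_nhds
          have := Metric.ball_mem_nhds t₀ (show (0:ℝ) < η / 2 by positivity)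
          filter_upwards [this] with y hy
          rw [Metric.mem_ball, Real.dist_eq] at hy
          exact hy
        filter_upwards [hevd, eventually_mem_nhdsWithin] with t hd ht
        rw [ae_restrict_iff' measurableSet_Iic]
        filter_upwards [hDeriv] with s hs hsmem
        rw [abs_lt] at hd
        have htJ : t ∈ J := hJmem t ht (by rw [abs_le]; constructor <;> linarith)
        by_cases hsc : s ≤ c
        · rw [if_pos hsc]
          exact le_csSup_F' hε hsc hs.2 htJ
        · rw [if_neg hsc]
          push_neg at hsc
          have hst : s < t := by
            have : s ≤ t₀ - η := hsmem
            linarith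
          have hb := hKer t htJ s ⟨hsc.le, hst⟩
          have h1 := ker_bound' hβ0 hγ0 hC.le hb
          have h2 : |s - t| ^ (-(β + γ)) ≤ (η / 2) ^ (-(β + γ)) := by
            apply Real.rpow_le_rpow_of_nonpos (by positivity) ?_ (by linarith)
            rw [abs_sub_comm, abs_of_pos (by linarith : (0:ℝ) < t - s)]
            have : s ≤ t₀ - η := hsmem
            linarith
          have h3 := mul_le_mul_of_nonneg_left
            (add_le_add_left h2 (|s - 0| ^ (-(β + γ)))) hC.le
          linarith
      · -- bound integrable
        have hint1 : IntegrableOn (fun s => if s ≤ c then (⨆ r : J, ‖F' (r : ℝ) s‖)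
            else C * (|s - 0| ^ (-(β + γ)) + (η / 2) ^ (-(β + γ)))) (Set.Iic c) volume := by
          apply IntegrableOn.congr_fun hSup _ measurableSet_Iic
          intro s hs
          exact (if_pos (hs : s ≤ c)).symm
        have hint2 : IntegrableOn (fun s => if s ≤ c then (⨆ r : J, ‖F' (r : ℝ) s‖)
            else C * (|s - 0| ^ (-(β + γ)) + (η / 2) ^ (-(β + γ)))) (Set.Ioc c (t₀ - η)) volume := by
          have hbase : IntegrableOn
              (fun s => C * (|s - 0| ^ (-(β + γ)) + (η / 2) ^ (-(β + γ))))
              (Set.Ioc c (t₀ - η)) volume := by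
            apply Integrable.const_mul
            apply (integrableOn_kernel hθ1 0 c (t₀ - η)).add
            exact (integrableOn_const_iff).mpr (Or.inr measure_Ioc_lt_top)
          apply IntegrableOn.congr_fun hbase _ measurableSet_Ioc
          intro s hs
          exact (if_neg (not_le.mpr hs.1)).symm
        have := hint1.union hint2
        rwa [Set.Iic_union_Ioc_eq_Iic hcη] at this
      · rw [ae_restrict_iff' measurableSet_Iic]
        filter_upwards [hDeriv] with s hs hsmem
        have hst₀ : s < t₀ := lt_of_le_of_lt hsmem (by linarith)
        have hmem2 : t₀ ∈ Set.Icc 0 T \ {s} :=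
          ⟨ht₀, fun h => ne_of_gt hst₀ h⟩
        have hcw := (hs.2 t₀ hmem2)
        rw [ContinuousWithinAt] at hcw
        have hfe : 𝓝[Set.Icc 0 T \ {s}] t₀ = 𝓝[Set.Icc 0 T] t₀ := by
          rw [Set.diff_eq]
          apply nhdsWithin_inter_of_mem'
          apply mem_nhdsWithin_of_mem_nhds
          exact IsOpen.mem_nhds isOpen_compl_singleton
            (by simp only [Set.mem_compl_iff, Set.mem_singleton_iff]; exact ne_of_gt hst₀)
        rwa [hfe] at hcw
    -- assemble
    rw [Metric.tendsto_nhds] at hmid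
    have hev3 := hmid (δ / 4) (by linarith)
    have hevd : ∀ᶠ t in 𝓝[Set.Icc 0 T] t₀, |t - t₀| < η / 2 := by
      apply Filter.Eventually.filter_mono nhdsWithin_le_nhds
      have := Metric.ball_mem_nhds t₀ (show (0:ℝ) < η / 2 by positivity)
      filter_upwards [this] with y hy
      rw [Metric.mem_ball, Real.dist_eq] at hy
      exact hy
    filter_upwards [hev3, hevd, eventually_mem_nhdsWithin] with t h1 hd ht
    rw [abs_lt] at hd
    have htJ : t ∈ J := hJmem t ht (by rw [abs_le]; constructor <;> linarith)
    have hsplit1 : ∫ s in Set.Iic t, F' t s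
        = (∫ s in Set.Iic (t₀ - η), F' t s) + ∫ s in Set.Ioc (t₀ - η) t, F' t s := by
      rw [← MeasureTheory.setIntegral_union (Set.Iic_disjoint_Ioc le_rfl) measurableSet_Ioc
        ((hintF' t ht).mono_set (Set.Iic_subset_Iic.mpr (by linarith)))
        ((hintF' t ht).mono_set Set.Ioc_subset_Iic_self),
        Set.Iic_union_Ioc_eq_Iic (by linarith : t₀ - η ≤ t)]
    have hsplit2 : ∫ s in Set.Iic t₀, F' t₀ s
        = (∫ s in Set.Iic (t₀ - η), F' t₀ s) + ∫ s in Set.Ioc (t₀ - η) t₀, F' t₀ s := by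
      rw [← MeasureTheory.setIntegral_union (Set.Iic_disjoint_Ioc le_rfl) measurableSet_Ioc
        ((hintF' t₀ ht₀).mono_set (Set.Iic_subset_Iic.mpr (by linarith)))
        ((hintF' t₀ ht₀).mono_set Set.Ioc_subset_Iic_self),
        Set.Iic_union_Ioc_eq_Iic (by linarith : t₀ - η ≤ t₀)]
    have htb1 : ‖∫ s in Set.Ioc (t₀ - η) t, F' t s‖ ≤ C * (4 * ((2 * η) ^ (1 - (β + γ)) / (1 - (β + γ)))) := by
      refine (htail t htJ ht (by linarith)).trans ?_
      have hm : (t - (t₀ - η)) ^ (1 - (β + γ)) ≤ (2 * η) ^ (1 - (β + γ)) :=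
        Real.rpow_le_rpow (by linarith) (by linarith) (by linarith)
      have := div_le_div_of_nonneg_right hm (by linarith : (0:ℝ) ≤ 1 - (β + γ))
      nlinarith [this]
    have htb2 : ‖∫ s in Set.Ioc (t₀ - η) t₀, F' t₀ s‖ ≤ C * (4 * ((2 * η) ^ (1 - (β + γ)) / (1 - (β + γ)))) := by
      refine (htail t₀ ht₀J ht₀ (by linarith)).trans ?_
      have hm : (t₀ - (t₀ - η)) ^ (1 - (β + γ)) ≤ (2 * η) ^ (1 - (β + γ)) :=
        Real.rpow_le_rpow (by linarith) (by linarith) (by linarith)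
      have := div_le_div_of_nonneg_right hm (by linarith : (0:ℝ) ≤ 1 - (β + γ))
      nlinarith [this]
    rw [dist_eq_norm, hsplit1, hsplit2]
    rw [dist_eq_norm] at h1
    have heq : (∫ s in Set.Iic (t₀ - η), F' t s) + (∫ s in Set.Ioc (t₀ - η) t, F' t s)
        - ((∫ s in Set.Iic (t₀ - η), F' t₀ s) + ∫ s in Set.Ioc (t₀ - η) t₀, F' t₀ s)
        = ((∫ s in Set.Iic (t₀ - η), F' t s) - (∫ s in Set.Iic (t₀ - η), F' t₀ s))
          + (∫ s in Set.Ioc (t₀ - η) t, F' t s) - (∫ s in Set.Ioc (t₀ - η) t₀, F' t₀ s) := by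
      ring
    rw [heq]
    have hn1 := norm_sub_le (((∫ s in Set.Iic (t₀ - η), F' t s) - (∫ s in Set.Iic (t₀ - η), F' t₀ s))
      + (∫ s in Set.Ioc (t₀ - η) t, F' t s)) (∫ s in Set.Ioc (t₀ - η) t₀, F' t₀ s)
    have hn2 := norm_add_le ((∫ s in Set.Iic (t₀ - η), F' t s) - (∫ s in Set.Iic (t₀ - η), F' t₀ s))
      (∫ s in Set.Ioc (t₀ - η) t, F' t s)
    linarith
  have hdiag : ContinuousOn (fun t => F t t) (Set.Icc 0 T) := by
    have hmap : Set.MapsTo (fun t : ℝ => ((t, t) : ℝ × ℝ)) (Set.Icc 0 T)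
        {p : ℝ × ℝ | τ ≤ p.2 ∧ p.2 ≤ p.1} := fun t ht => ⟨le_trans hτ ht.1, le_rfl⟩
    exact hContF.comp ((continuous_id.prodMk continuous_id).continuousOn) hmap
  refine ⟨?_, hdiag.add hcontInt⟩
  intro t₀ ht₀
  obtain ⟨ε, hε, C, hC, hSup, hKer⟩ := hLoc t₀ ht₀
  set c := t₀ - 2 * ε with hc
  set J := Set.Icc (max 0 (t₀ - ε)) (min (t₀ + ε) T) with hJdef
  have ht₀J : t₀ ∈ J := ⟨max_le ht₀.1 (by linarith), le_min (by linarith) ht₀.2⟩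
  have hJmem : ∀ t ∈ Set.Icc 0 T, |t - t₀| ≤ ε → t ∈ J := by
    intro t ht hd
    rw [abs_le] at hd
    exact ⟨max_le ht.1 (by linarith [hd.1]), le_min (by linarith [hd.2]) ht.2⟩
  have hQrep : ∀ s : ℝ, ((∀ t ∈ Set.Icc 0 T \ {s}, HasDerivAt (fun r => F r s) (F' t s) t) ∧
      ContinuousOn (fun t => F' t s) (Set.Icc 0 T \ {s})) → ∀ t ∈ Set.Icc 0 T, s < t → s < t₀ →
      F t s - F t₀ s = ∫ r in t₀..t, F' r s := by
    intro s hs t ht hst hst₀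
    have hsub : Set.uIcc t₀ t ⊆ Set.Icc 0 T \ {s} := by
      intro r hr
      refine ⟨Set.ordConnected_Icc.uIcc_subset ht₀ ht hr, ?_⟩
      simp only [Set.mem_singleton_iff]
      rcases Set.mem_uIcc.mp hr with h | h
      · intro hrs; rw [hrs] at h; linarith [h.1]
      · intro hrs; rw [hrs] at h; linarith [h.1]
    have hder : ∀ r ∈ Set.uIcc t₀ t, HasDerivAt (fun u => F u s) (F' r s) r :=
      fun r hr => hs.1 r (hsub hr)
    have hii : IntervalIntegrable (fun r => F' r s) volume t₀ t :=
      (hs.2.mono hsub).intervalIntegrable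
    rw [intervalIntegral.integral_eq_sub_of_hasDerivAt hder hii]
  rw [hasDerivWithinAt_iff_tendsto_slope]
  have hsetsplit : Set.Icc (0:ℝ) T \ {t₀}
      = (Set.Icc 0 T ∩ Set.Iio t₀) ∪ (Set.Icc 0 T ∩ Set.Ioi t₀) := by
    ext y
    simp only [Set.mem_diff, Set.mem_singleton_iff, Set.mem_union, Set.mem_inter_iff,
      Set.mem_Iio, Set.mem_Ioi]
    constructor
    · rintro ⟨hy, hne'⟩
      rcases lt_or_gt_of_ne hne' with h | h
      · exact Or.inl ⟨hy, h⟩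
      · exact Or.inr ⟨hy, h⟩
    · rintro (⟨hy, h⟩ | ⟨hy, h⟩)
      · exact ⟨hy, ne_of_lt h⟩
      · exact ⟨hy, ne_of_gt h⟩
  rw [hsetsplit, nhdsWithin_union, Filter.tendsto_sup]
  constructor
  · -- LEFT side
    have hBl : Filter.Tendsto (fun t => (t₀ - t)⁻¹ • ∫ s in Set.Ioc t t₀, F t₀ s)
        (𝓝[Set.Icc 0 T ∩ Set.Iio t₀] t₀) (𝓝 (F t₀ t₀)) := by
      rw [Metric.tendsto_nhdsWithin_nhds]
      intro δ hδ
      have hcw := hContF (t₀, t₀) ⟨le_trans hτ ht₀.1, le_rfl⟩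
      rw [ContinuousWithinAt, Metric.tendsto_nhdsWithin_nhds] at hcw
      obtain ⟨ρ, hρ0, hρ⟩ := hcw (δ / 2) (by linarith)
      refine ⟨ρ / 2, by positivity, ?_⟩
      rintro t ⟨htI, htlt'⟩ hdist
      rw [Real.dist_eq] at hdist
      have htlt : t < t₀ := htlt'
      have habs := abs_lt.mp hdist
      have hFb : ∀ s ∈ Set.Ioc t t₀, ‖F t₀ s - F t₀ t₀‖ ≤ δ / 2 := by
        intro s hsm
        have hreg : ((t₀, s) : ℝ × ℝ) ∈ {p : ℝ × ℝ | τ ≤ p.2 ∧ p.2 ≤ p.1} :=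
          ⟨le_trans hτ (le_trans htI.1 hsm.1.le), hsm.2⟩
        have hd2 : dist ((t₀, s) : ℝ × ℝ) ((t₀, t₀) : ℝ × ℝ) < ρ := by
          rw [Prod.dist_eq]
          apply max_lt
          · rw [Real.dist_eq]; simpa using hρ0
          · rw [Real.dist_eq]
            have h1 : t < s := hsm.1
            have h2 : s ≤ t₀ := hsm.2
            rw [abs_sub_comm, abs_of_nonneg (by linarith : (0:ℝ) ≤ t₀ - s)]
            linarith
        have h3 := hρ hreg hd2
        rw [dist_eq_norm] at h3
        exact h3.le
      rw [dist_eq_norm]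
      have hvol : (volume (Set.Ioc t t₀)).toReal = t₀ - t := by
        rw [Real.volume_Ioc, ENNReal.toReal_ofReal (by linarith)]
      have hFint : IntegrableOn (F t₀) (Set.Ioc t t₀) volume := (hInt t₀ ht₀).integrableOn
      have hconst : IntegrableOn (fun _ : ℝ => F t₀ t₀) (Set.Ioc t t₀) volume :=
        (integrableOn_const_iff).mpr (Or.inr measure_Ioc_lt_top)
      have heq : (t₀ - t)⁻¹ • (∫ s in Set.Ioc t t₀, F t₀ s) - F t₀ t₀
          = (t₀ - t)⁻¹ • ∫ s in Set.Ioc t t₀, (F t₀ s - F t₀ t₀) := by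
        rw [MeasureTheory.integral_sub hFint hconst, MeasureTheory.setIntegral_const, measureReal_def, hvol,
          smul_sub, smul_smul, inv_mul_cancel₀ (by intro h; rw [sub_eq_zero] at h; exact ne_of_gt htlt' h), one_smul]
      rw [heq, norm_smul]
      have hb := MeasureTheory.norm_setIntegral_le_of_norm_le_const
        (show volume (Set.Ioc t t₀) < ⊤ by rw [Real.volume_Ioc]; exact ENNReal.ofReal_lt_top)
        hFb
      rw [measureReal_def, hvol] at hb
      have hnrm : ‖(t₀ - t)⁻¹‖ = (t₀ - t)⁻¹ := by
        rw [Real.norm_eq_abs, abs_of_pos (by simp only [inv_pos]; linarith)]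
      rw [hnrm]
      calc (t₀ - t)⁻¹ * ‖∫ s in Set.Ioc t t₀, (F t₀ s - F t₀ t₀)‖
          ≤ (t₀ - t)⁻¹ * (δ / 2 * (t₀ - t)) := by
            apply mul_le_mul_of_nonneg_left hb (by simp only [inv_nonneg]; linarith)
        _ = δ / 2 := by
            rw [mul_comm (δ / 2) (t₀ - t), ← mul_assoc,
              inv_mul_cancel₀ (ne_of_gt (show (0:ℝ) < t₀ - t by linarith)), one_mul]
        _ < δ := by linarith
    have hAl : Filter.Tendsto (fun t => ∫ s in Set.Iic t, (t - t₀)⁻¹ • (F t s - F t₀ s))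
        (𝓝[Set.Icc 0 T ∩ Set.Iio t₀] t₀) (𝓝 (∫ s in Set.Iic t₀, F' t₀ s)) := by
      rw [Metric.tendsto_nhds]
      intro δ hδ
      have hcont0 : Filter.Tendsto (fun x : ℝ => C * (4 * (x ^ (1 - (β + γ)) / (1 - (β + γ)))))
          (𝓝[>] (0:ℝ)) (𝓝 0) := by
        have h1 : ContinuousAt (fun x : ℝ => x ^ (1 - (β + γ))) 0 :=
          Real.continuousAt_rpow_const 0 _ (Or.inr (by linarith))
        have h2 := h1.tendsto
        rw [Real.zero_rpow (by linarith : 1 - (β + γ) ≠ 0)] at h2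
        have h3 := ((h2.div_const (1 - (β + γ))).const_mul 4).const_mul C
        simp only [zero_div, mul_zero] at h3
        exact h3.mono_left nhdsWithin_le_nhds
      have hev1 : ∀ᶠ x in 𝓝[>] (0:ℝ),
          C * (4 * (x ^ (1 - (β + γ)) / (1 - (β + γ)))) < δ / 4 :=
        hcont0.eventually_lt_const (by linarith)
      have hev2 : ∀ᶠ x in 𝓝[>] (0:ℝ), x < ε :=
        Filter.Eventually.filter_mono nhdsWithin_le_nhds (eventually_lt_nhds hε)
      obtain ⟨x, hxδ, hxε, hx0⟩ := (hev1.and (hev2.and self_mem_nhdsWithin)).exists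
      set η := x / 2 with hηdef
      have hη0 : 0 < η := by simp only [hηdef]; exact half_pos hx0
      have hηε : η < ε := by simp only [hηdef]; linarith
      have hηδ : C * (4 * ((2 * η) ^ (1 - (β + γ)) / (1 - (β + γ)))) < δ / 4 := by
        have h2η : 2 * η = x := by simp only [hηdef]; ring
        rwa [h2η]
      have hcη : c ≤ t₀ - η := by simp only [hc]; linarith
      have hKnn : (0:ℝ) ≤ C * (4 * ((2 * η) ^ (1 - (β + γ)) / (1 - (β + γ)))) := by
        apply mul_nonneg hC.le
        apply mul_nonneg (by norm_num)
        exact div_nonneg (Real.rpow_nonneg (by linarith) _) (by linarith)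
      -- tail bound for F' t₀
      have htail0 : ‖∫ s in Set.Ioc (t₀ - η) t₀, F' t₀ s‖
          ≤ C * (4 * ((2 * η) ^ (1 - (β + γ)) / (1 - (β + γ)))) := by
        have hin : IntegrableOn (F' t₀) (Set.Ioc (t₀ - η) t₀) volume :=
          (hintF' t₀ ht₀).mono_set Set.Ioc_subset_Iic_self
        have hstep : ‖∫ s in Set.Ioc (t₀ - η) t₀, F' t₀ s‖
            ≤ ∫ s in Set.Ioc (t₀ - η) t₀, C * (|s - 0| ^ (-(β + γ)) + |s - t₀| ^ (-(β + γ))) := by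
          refine (MeasureTheory.norm_integral_le_integral_norm _).trans ?_
          apply MeasureTheory.integral_mono_ae hin.norm
            (integrableOn_ker_sum C hθ1 t₀ (t₀ - η) t₀)
          rw [Filter.EventuallyLE, ae_restrict_iff' measurableSet_Ioc]
          filter_upwards [hne t₀] with s hsne hsmem
          have hb := hKer t₀ ht₀J s ⟨le_trans hcη hsmem.1.le, lt_of_le_of_ne hsmem.2 hsne⟩
          exact ker_bound' hβ0 hγ0 hC.le hb
        refine hstep.trans ?_
        refine (integral_ker_sum_le hθ0 hθ1 hC.le t₀ (by linarith : t₀ - η ≤ t₀)).trans ?_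
        have hm : (t₀ - (t₀ - η)) ^ (1 - (β + γ)) ≤ (2 * η) ^ (1 - (β + γ)) :=
          Real.rpow_le_rpow (by linarith) (by linarith) (by linarith)
        have hd := div_le_div_of_nonneg_right hm (by linarith : (0:ℝ) ≤ 1 - (β + γ))
        nlinarith [hd]
      -- middle DCT
      have hmidl : Filter.Tendsto (fun t => ∫ s in Set.Iic (t₀ - η), (t - t₀)⁻¹ • (F t s - F t₀ s))
          (𝓝[Set.Icc 0 T ∩ Set.Iio t₀] t₀) (𝓝 (∫ s in Set.Iic (t₀ - η), F' t₀ s)) := by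
        apply MeasureTheory.tendsto_integral_filter_of_dominated_convergence
          (bound := fun s => if s ≤ c then (⨆ r : J, ‖F' (r : ℝ) s‖)
            else C * (|s - 0| ^ (-(β + γ)) + (η / 2) ^ (-(β + γ))))
        · filter_upwards [eventually_mem_nhdsWithin] with t ht
          exact (((hInt t ht.1).sub (hInt t₀ ht₀)).aestronglyMeasurable.const_smul ((t - t₀)⁻¹ : ℝ)).restrict
        · have hevd : ∀ᶠ t in 𝓝[Set.Icc 0 T ∩ Set.Iio t₀] t₀, |t - t₀| < η / 2 := by
            apply Filter.Eventually.filter_mono nhdsWithin_le_nhds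
            filter_upwards [Metric.ball_mem_nhds t₀ (show (0:ℝ) < η / 2 by positivity)] with y hy
            rw [Metric.mem_ball, Real.dist_eq] at hy
            exact hy
          filter_upwards [hevd, eventually_mem_nhdsWithin] with t hd ht
          rw [ae_restrict_iff' measurableSet_Iic]
          filter_upwards [hDeriv] with s hs hsmem
          have htlt : t < t₀ := ht.2
          have habs := abs_lt.mp hd
          have hsle : s ≤ t₀ - η := hsmem
          have hst : s < t := by linarith
          have htabs : |t - t₀| ≠ 0 := abs_ne_zero.mpr (sub_ne_zero.mpr (ne_of_lt htlt))
          have hrep := hQrep s hs t ht.1 hst (by linarith)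
          have hrJ : ∀ r, r ∈ Set.uIoc t₀ t → r ∈ J ∧ t - s ≤ r - s := by
            intro r hr
            rw [Set.uIoc_comm, Set.uIoc_of_le htlt.le, Set.mem_Ioc] at hr
            constructor
            · exact ⟨max_le (by linarith [ht.1.1, hr.1]) (by linarith [hr.1, habs.1]),
                le_min (by linarith [hr.2]) (le_trans hr.2 ht₀.2)⟩
            · linarith [hr.1]
          by_cases hsc : s ≤ c
          · rw [if_pos hsc, hrep]
            have hb : ∀ r ∈ Set.uIoc t₀ t, ‖F' r s‖
                ≤ (⨆ r' : J, ‖F' (r' : ℝ) s‖) := by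
              intro r hr
              exact le_csSup_F' hε hsc hs.2 (hrJ r hr).1
            have hn := intervalIntegral.norm_integral_le_of_norm_le_const hb
            calc ‖(t - t₀)⁻¹ • ∫ r in t₀..t, F' r s‖
                = |t - t₀|⁻¹ * ‖∫ r in t₀..t, F' r s‖ := by
                  rw [norm_smul, Real.norm_eq_abs, abs_inv]
              _ ≤ |t - t₀|⁻¹ * ((⨆ r' : J, ‖F' (r' : ℝ) s‖) * |t - t₀|) := by
                  apply mul_le_mul_of_nonneg_left hn (by positivity)
              _ = (⨆ r' : J, ‖F' (r' : ℝ) s‖) := by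
                  rw [mul_comm (⨆ r' : J, ‖F' (r' : ℝ) s‖) (|t - t₀|), ← mul_assoc,
                    inv_mul_cancel₀ htabs, one_mul]
          · rw [if_neg hsc, hrep]
            push_neg at hsc
            have hb : ∀ r ∈ Set.uIoc t₀ t, ‖F' r s‖
                ≤ C * (|s - 0| ^ (-(β + γ)) + (η / 2) ^ (-(β + γ))) := by
              intro r hr
              obtain ⟨hrJ', hrs⟩ := hrJ r hr
              have hker := hKer r hrJ' s ⟨hsc.le, by linarith⟩
              have h1 := ker_bound' hβ0 hγ0 hC.le hker
              refine h1.trans ?_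
              have h2 : |s - r| ^ (-(β + γ)) ≤ (η / 2) ^ (-(β + γ)) := by
                apply Real.rpow_le_rpow_of_nonpos (by positivity) ?_ (by linarith)
                rw [abs_sub_comm s r, abs_of_pos (by linarith : (0:ℝ) < r - s)]
                linarith
              exact mul_le_mul_of_nonneg_left (add_le_add_right h2 _) hC.le
            have hn := intervalIntegral.norm_integral_le_of_norm_le_const hb
            calc ‖(t - t₀)⁻¹ • ∫ r in t₀..t, F' r s‖
                = |t - t₀|⁻¹ * ‖∫ r in t₀..t, F' r s‖ := by
                  rw [norm_smul, Real.norm_eq_abs, abs_inv]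
              _ ≤ |t - t₀|⁻¹ * ((C * (|s - 0| ^ (-(β + γ)) + (η / 2) ^ (-(β + γ)))) * |t - t₀|) := by
                  apply mul_le_mul_of_nonneg_left hn (by positivity)
              _ = C * (|s - 0| ^ (-(β + γ)) + (η / 2) ^ (-(β + γ))) := by
                  rw [mul_comm (C * (|s - 0| ^ (-(β + γ)) + (η / 2) ^ (-(β + γ)))) (|t - t₀|),
                    ← mul_assoc, inv_mul_cancel₀ htabs, one_mul]
        · have hint1 : IntegrableOn (fun s => if s ≤ c then (⨆ r : J, ‖F' (r : ℝ) s‖)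
              else C * (|s - 0| ^ (-(β + γ)) + (η / 2) ^ (-(β + γ)))) (Set.Iic c) volume := by
            apply IntegrableOn.congr_fun hSup _ measurableSet_Iic
            intro s hs
            exact (if_pos (hs : s ≤ c)).symm
          have hint2 : IntegrableOn (fun s => if s ≤ c then (⨆ r : J, ‖F' (r : ℝ) s‖)
              else C * (|s - 0| ^ (-(β + γ)) + (η / 2) ^ (-(β + γ)))) (Set.Ioc c (t₀ - η)) volume := by
            have hbase : IntegrableOn
                (fun s => C * (|s - 0| ^ (-(β + γ)) + (η / 2) ^ (-(β + γ))))
                (Set.Ioc c (t₀ - η)) volume := by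
              apply Integrable.const_mul
              apply (integrableOn_kernel hθ1 0 c (t₀ - η)).add
              exact (integrableOn_const_iff).mpr (Or.inr measure_Ioc_lt_top)
            apply IntegrableOn.congr_fun hbase _ measurableSet_Ioc
            intro s hs
            exact (if_neg (not_le.mpr hs.1)).symm
          have hu := hint1.union hint2
          rwa [Set.Iic_union_Ioc_eq_Iic hcη] at hu
        · rw [ae_restrict_iff' measurableSet_Iic]
          filter_upwards [hDeriv] with s hs hsmem
          have hst₀ : s < t₀ := by have hsle : s ≤ t₀ - η := hsmem; linarith
          have hdAt := hs.1 t₀ ⟨ht₀, fun h => ne_of_gt hst₀ h⟩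
          have hslope := hasDerivAt_iff_tendsto_slope.mp hdAt
          have hmono : 𝓝[Set.Icc 0 T ∩ Set.Iio t₀] t₀ ≤ 𝓝[≠] t₀ :=
            nhdsWithin_mono _ (fun y hy => ne_of_lt hy.2)
          apply (hslope.mono_left hmono).congr
          intro t
          rw [slope_def_module]
      rw [Metric.tendsto_nhds] at hmidl
      have hev3 := hmidl (δ / 4) (by linarith)
      have hevd : ∀ᶠ t in 𝓝[Set.Icc 0 T ∩ Set.Iio t₀] t₀, |t - t₀| < η / 2 := by
        apply Filter.Eventually.filter_mono nhdsWithin_le_nhds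
        filter_upwards [Metric.ball_mem_nhds t₀ (show (0:ℝ) < η / 2 by positivity)] with y hy
        rw [Metric.mem_ball, Real.dist_eq] at hy
        exact hy
      filter_upwards [hev3, hevd, eventually_mem_nhdsWithin] with t h1 hd ht
      have htlt : t < t₀ := ht.2
      have habs := abs_lt.mp hd
      have hQI : Integrable (fun s => (t - t₀)⁻¹ • (F t s - F t₀ s)) (volume : Measure ℝ) := by
        have := ((hInt t ht.1).sub (hInt t₀ ht₀)).smul ((t - t₀)⁻¹ : ℝ)
        exact this
      -- tail bound for Q
      have htailQ : ‖∫ s in Set.Ioc (t₀ - η) t, (t - t₀)⁻¹ • (F t s - F t₀ s)‖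
          ≤ C * (4 * ((2 * η) ^ (1 - (β + γ)) / (1 - (β + γ)))) := by
        have hin : IntegrableOn (fun s => (t - t₀)⁻¹ • (F t s - F t₀ s))
            (Set.Ioc (t₀ - η) t) volume := hQI.integrableOn
        have hstep : ‖∫ s in Set.Ioc (t₀ - η) t, (t - t₀)⁻¹ • (F t s - F t₀ s)‖
            ≤ ∫ s in Set.Ioc (t₀ - η) t, C * (|s - 0| ^ (-(β + γ)) + |s - t| ^ (-(β + γ))) := by
          refine (MeasureTheory.norm_integral_le_integral_norm _).trans ?_
          apply MeasureTheory.integral_mono_ae hin.norm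
            (integrableOn_ker_sum C hθ1 t (t₀ - η) t)
          rw [Filter.EventuallyLE, ae_restrict_iff' measurableSet_Ioc]
          filter_upwards [hDeriv, hne t] with s hs hsne hsmem
          have hst : s < t := lt_of_le_of_ne hsmem.2 hsne
          have htabs : |t - t₀| ≠ 0 := abs_ne_zero.mpr (sub_ne_zero.mpr (ne_of_lt htlt))
          have hrep := hQrep s hs t ht.1 hst (by linarith)
          have hb : ∀ r ∈ Set.uIoc t₀ t, ‖F' r s‖
              ≤ C * (|s - 0| ^ (-(β + γ)) + |s - t| ^ (-(β + γ))) := by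
            intro r hr
            rw [Set.uIoc_comm, Set.uIoc_of_le htlt.le, Set.mem_Ioc] at hr
            have hrJ' : r ∈ J := ⟨max_le (by linarith [ht.1.1, hr.1]) (by linarith [hr.1, habs.1]),
              le_min (by linarith [hr.2]) (le_trans hr.2 ht₀.2)⟩
            have hker := hKer r hrJ' s ⟨by linarith [hsmem.1, hcη], by linarith [hr.1]⟩
            have h2 := ker_bound' hβ0 hγ0 hC.le hker
            refine h2.trans ?_
            have h3 : |s - r| ^ (-(β + γ)) ≤ |s - t| ^ (-(β + γ)) := by
              apply Real.rpow_le_rpow_of_nonpos (by rw [abs_pos, sub_ne_zero]; exact ne_of_lt hst) ?_ (by linarith)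
              rw [abs_sub_comm s r, abs_sub_comm s t,
                abs_of_pos (by linarith [hr.1] : (0:ℝ) < r - s),
                abs_of_pos (by linarith : (0:ℝ) < t - s)]
              linarith [hr.1]
            exact mul_le_mul_of_nonneg_left (add_le_add_right h3 _) hC.le
          have hn := intervalIntegral.norm_integral_le_of_norm_le_const hb
          rw [hrep]
          calc ‖(t - t₀)⁻¹ • ∫ r in t₀..t, F' r s‖
              = |t - t₀|⁻¹ * ‖∫ r in t₀..t, F' r s‖ := by
                rw [norm_smul, Real.norm_eq_abs, abs_inv]
            _ ≤ |t - t₀|⁻¹ * ((C * (|s - 0| ^ (-(β + γ)) + |s - t| ^ (-(β + γ)))) * |t - t₀|) := by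
                apply mul_le_mul_of_nonneg_left hn (by positivity)
            _ = C * (|s - 0| ^ (-(β + γ)) + |s - t| ^ (-(β + γ))) := by
                rw [mul_comm (C * (|s - 0| ^ (-(β + γ)) + |s - t| ^ (-(β + γ)))) (|t - t₀|),
                  ← mul_assoc, inv_mul_cancel₀ htabs, one_mul]
        refine hstep.trans ?_
        refine (integral_ker_sum_le hθ0 hθ1 hC.le t (by linarith : t₀ - η ≤ t)).trans ?_
        have hm : (t - (t₀ - η)) ^ (1 - (β + γ)) ≤ (2 * η) ^ (1 - (β + γ)) :=
          Real.rpow_le_rpow (by linarith) (by linarith) (by linarith)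
        have hdm := div_le_div_of_nonneg_right hm (by linarith : (0:ℝ) ≤ 1 - (β + γ))
        nlinarith [hdm]
      -- splitting
      have hsplitQ : ∫ s in Set.Iic t, (t - t₀)⁻¹ • (F t s - F t₀ s)
          = (∫ s in Set.Iic (t₀ - η), (t - t₀)⁻¹ • (F t s - F t₀ s))
            + ∫ s in Set.Ioc (t₀ - η) t, (t - t₀)⁻¹ • (F t s - F t₀ s) := by
        rw [← MeasureTheory.setIntegral_union (Set.Iic_disjoint_Ioc le_rfl) measurableSet_Ioc
          hQI.integrableOn hQI.integrableOn,
          Set.Iic_union_Ioc_eq_Iic (by linarith : t₀ - η ≤ t)]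
      have hsplitL : ∫ s in Set.Iic t₀, F' t₀ s
          = (∫ s in Set.Iic (t₀ - η), F' t₀ s) + ∫ s in Set.Ioc (t₀ - η) t₀, F' t₀ s := by
        rw [← MeasureTheory.setIntegral_union (Set.Iic_disjoint_Ioc le_rfl) measurableSet_Ioc
          ((hintF' t₀ ht₀).mono_set (Set.Iic_subset_Iic.mpr (by linarith)))
          ((hintF' t₀ ht₀).mono_set Set.Ioc_subset_Iic_self),
          Set.Iic_union_Ioc_eq_Iic (by linarith : t₀ - η ≤ t₀)]
      rw [dist_eq_norm, hsplitQ, hsplitL]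
      rw [dist_eq_norm] at h1
      have heq2 : (∫ s in Set.Iic (t₀ - η), (t - t₀)⁻¹ • (F t s - F t₀ s))
            + (∫ s in Set.Ioc (t₀ - η) t, (t - t₀)⁻¹ • (F t s - F t₀ s))
          - ((∫ s in Set.Iic (t₀ - η), F' t₀ s) + ∫ s in Set.Ioc (t₀ - η) t₀, F' t₀ s)
          = ((∫ s in Set.Iic (t₀ - η), (t - t₀)⁻¹ • (F t s - F t₀ s))
              - (∫ s in Set.Iic (t₀ - η), F' t₀ s))
            + (∫ s in Set.Ioc (t₀ - η) t, (t - t₀)⁻¹ • (F t s - F t₀ s))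
            - (∫ s in Set.Ioc (t₀ - η) t₀, F' t₀ s) := by ring
      rw [heq2]
      have hn1 := norm_sub_le (((∫ s in Set.Iic (t₀ - η), (t - t₀)⁻¹ • (F t s - F t₀ s))
        - (∫ s in Set.Iic (t₀ - η), F' t₀ s))
        + (∫ s in Set.Ioc (t₀ - η) t, (t - t₀)⁻¹ • (F t s - F t₀ s)))
        (∫ s in Set.Ioc (t₀ - η) t₀, F' t₀ s)
      have hn2 := norm_add_le ((∫ s in Set.Iic (t₀ - η), (t - t₀)⁻¹ • (F t s - F t₀ s))
        - (∫ s in Set.Iic (t₀ - η), F' t₀ s))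
        (∫ s in Set.Ioc (t₀ - η) t, (t - t₀)⁻¹ • (F t s - F t₀ s))
      linarith
    have hsum := hAl.add hBl
    have hcomm : (∫ s in Set.Iic t₀, F' t₀ s) + F t₀ t₀
        = F t₀ t₀ + ∫ s in Set.Iic t₀, F' t₀ s := add_comm _ _
    rw [hcomm] at hsum
    apply Filter.Tendsto.congr' _ hsum
    filter_upwards [eventually_mem_nhdsWithin] with t ht
    obtain ⟨htI, htlt'⟩ := ht
    have htlt : t < t₀ := htlt'
    rw [slope_def_module]
    have hIsplit : ∫ s in Set.Iic t₀, F t₀ s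
        = (∫ s in Set.Iic t, F t₀ s) + ∫ s in Set.Ioc t t₀, F t₀ s := by
      rw [← MeasureTheory.setIntegral_union (Set.Iic_disjoint_Ioc le_rfl) measurableSet_Ioc
        ((hInt t₀ ht₀).integrableOn) ((hInt t₀ ht₀).integrableOn),
        Set.Iic_union_Ioc_eq_Iic htlt.le]
    have hQint : ∫ s in Set.Iic t, (t - t₀)⁻¹ • (F t s - F t₀ s)
        = (t - t₀)⁻¹ • ((∫ s in Set.Iic t, F t s) - ∫ s in Set.Iic t, F t₀ s) := by
      rw [MeasureTheory.integral_smul, MeasureTheory.integral_sub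
        ((hInt t htI).integrableOn) ((hInt t₀ ht₀).integrableOn)]
    have hBeq : (t₀ - t)⁻¹ • (∫ s in Set.Ioc t t₀, F t₀ s)
        = -((t - t₀)⁻¹ • (∫ s in Set.Ioc t t₀, F t₀ s)) := by
      rw [show (t₀ - t) = -(t - t₀) by ring, inv_neg, neg_smul]
    rw [hQint, hBeq, hIsplit]
    simp only [smul_sub, smul_add]
    abel
  · -- RIGHT side
    have hBr : Filter.Tendsto (fun t => (t - t₀)⁻¹ • ∫ s in Set.Ioc t₀ t, F t s)
        (𝓝[Set.Icc 0 T ∩ Set.Ioi t₀] t₀) (𝓝 (F t₀ t₀)) := by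
      rw [Metric.tendsto_nhdsWithin_nhds]
      intro δ hδ
      have hcw := hContF (t₀, t₀) ⟨le_trans hτ ht₀.1, le_rfl⟩
      rw [ContinuousWithinAt, Metric.tendsto_nhdsWithin_nhds] at hcw
      obtain ⟨ρ, hρ0, hρ⟩ := hcw (δ / 2) (by linarith)
      refine ⟨ρ / 2, by positivity, ?_⟩
      rintro t ⟨htI, htgt'⟩ hdist
      rw [Real.dist_eq] at hdist
      have htgt : t₀ < t := htgt'
      have habs := abs_lt.mp hdist
      have hFb : ∀ s ∈ Set.Ioc t₀ t, ‖F t s - F t₀ t₀‖ ≤ δ / 2 := by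
        intro s hsm
        have hreg : ((t, s) : ℝ × ℝ) ∈ {p : ℝ × ℝ | τ ≤ p.2 ∧ p.2 ≤ p.1} :=
          ⟨le_trans hτ (le_trans ht₀.1 hsm.1.le), hsm.2⟩
        have hd2 : dist ((t, s) : ℝ × ℝ) ((t₀, t₀) : ℝ × ℝ) < ρ := by
          rw [Prod.dist_eq]
          apply max_lt
          · rw [Real.dist_eq]; rw [abs_lt]; constructor <;> linarith
          · rw [Real.dist_eq]
            have h1 : t₀ < s := hsm.1
            have h2 : s ≤ t := hsm.2
            rw [abs_of_pos (by linarith : (0:ℝ) < s - t₀)]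
            linarith
        have h3 := hρ hreg hd2
        rw [dist_eq_norm] at h3
        exact h3.le
      rw [dist_eq_norm]
      have hvol : (volume (Set.Ioc t₀ t)).toReal = t - t₀ := by
        rw [Real.volume_Ioc, ENNReal.toReal_ofReal (by linarith)]
      have hFint : IntegrableOn (F t) (Set.Ioc t₀ t) volume := (hInt t htI).integrableOn
      have hconst : IntegrableOn (fun _ : ℝ => F t₀ t₀) (Set.Ioc t₀ t) volume :=
        (integrableOn_const_iff).mpr (Or.inr measure_Ioc_lt_top)
      have heq : (t - t₀)⁻¹ • (∫ s in Set.Ioc t₀ t, F t s) - F t₀ t₀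
          = (t - t₀)⁻¹ • ∫ s in Set.Ioc t₀ t, (F t s - F t₀ t₀) := by
        rw [MeasureTheory.integral_sub hFint hconst, MeasureTheory.setIntegral_const, measureReal_def, hvol,
          smul_sub, smul_smul, inv_mul_cancel₀ (by intro h; rw [sub_eq_zero] at h; exact ne_of_gt htgt h), one_smul]
      rw [heq, norm_smul]
      have hb := MeasureTheory.norm_setIntegral_le_of_norm_le_const
        (show volume (Set.Ioc t₀ t) < ⊤ by rw [Real.volume_Ioc]; exact ENNReal.ofReal_lt_top)
        hFb
      rw [measureReal_def, hvol] at hb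
      have hnrm : ‖(t - t₀)⁻¹‖ = (t - t₀)⁻¹ := by
        rw [Real.norm_eq_abs, abs_of_pos (by simp only [inv_pos]; linarith)]
      rw [hnrm]
      calc (t - t₀)⁻¹ * ‖∫ s in Set.Ioc t₀ t, (F t s - F t₀ t₀)‖
          ≤ (t - t₀)⁻¹ * (δ / 2 * (t - t₀)) := by
            apply mul_le_mul_of_nonneg_left hb (by simp only [inv_nonneg]; linarith)
        _ = δ / 2 := by
            rw [mul_comm (δ / 2) (t - t₀), ← mul_assoc,
              inv_mul_cancel₀ (ne_of_gt (show (0:ℝ) < t - t₀ by linarith)), one_mul]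
        _ < δ := by linarith
    have hAr : Filter.Tendsto (fun t => ∫ s in Set.Iic t₀, (t - t₀)⁻¹ • (F t s - F t₀ s))
        (𝓝[Set.Icc 0 T ∩ Set.Ioi t₀] t₀) (𝓝 (∫ s in Set.Iic t₀, F' t₀ s)) := by
      apply MeasureTheory.tendsto_integral_filter_of_dominated_convergence
        (bound := fun s => if s ≤ c then (⨆ r : J, ‖F' (r : ℝ) s‖)
          else C * (|s - 0| ^ (-(β + γ)) + |s - t₀| ^ (-(β + γ))))
      · filter_upwards [eventually_mem_nhdsWithin] with t ht
        exact (((hInt t ht.1).sub (hInt t₀ ht₀)).aestronglyMeasurable.const_smul ((t - t₀)⁻¹ : ℝ)).restrict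
      · have hevd : ∀ᶠ t in 𝓝[Set.Icc 0 T ∩ Set.Ioi t₀] t₀, |t - t₀| < ε := by
          apply Filter.Eventually.filter_mono nhdsWithin_le_nhds
          filter_upwards [Metric.ball_mem_nhds t₀ hε] with y hy
          rw [Metric.mem_ball, Real.dist_eq] at hy
          exact hy
        filter_upwards [hevd, eventually_mem_nhdsWithin] with t hd ht
        rw [ae_restrict_iff' measurableSet_Iic]
        filter_upwards [hDeriv, hne t₀] with s hs hsne hsmem
        have hst₀ : s < t₀ := lt_of_le_of_ne hsmem hsne
        have htgt : t₀ < t := ht.2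
        have htabs : |t - t₀| ≠ 0 := abs_ne_zero.mpr (sub_ne_zero.mpr (ne_of_gt htgt))
        have habs := abs_lt.mp hd
        have hrep := hQrep s hs t ht.1 (by linarith) hst₀
        by_cases hsc : s ≤ c
        · rw [if_pos hsc, hrep]
          have hb : ∀ r ∈ Set.uIoc t₀ t, ‖F' r s‖
              ≤ (⨆ r' : J, ‖F' (r' : ℝ) s‖) := by
            intro r hr
            rw [Set.uIoc_of_le htgt.le, Set.mem_Ioc] at hr
            have hrJ : r ∈ J := ⟨max_le (by linarith [ht₀.1, hr.1]) (by linarith [hr.1, habs.1]),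
              le_min (by linarith [hr.2, habs.2]) (le_trans hr.2 ht.1.2)⟩
            exact le_csSup_F' hε hsc hs.2 hrJ
          have hn := intervalIntegral.norm_integral_le_of_norm_le_const hb
          calc ‖(t - t₀)⁻¹ • ∫ r in t₀..t, F' r s‖
              = |t - t₀|⁻¹ * ‖∫ r in t₀..t, F' r s‖ := by
                rw [norm_smul, Real.norm_eq_abs, abs_inv]
            _ ≤ |t - t₀|⁻¹ * ((⨆ r' : J, ‖F' (r' : ℝ) s‖) * |t - t₀|) := by
                apply mul_le_mul_of_nonneg_left hn (by positivity)
            _ = (⨆ r' : J, ‖F' (r' : ℝ) s‖) := by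
                rw [mul_comm (⨆ r' : J, ‖F' (r' : ℝ) s‖) (|t - t₀|), ← mul_assoc,
                  inv_mul_cancel₀ htabs, one_mul]
        · rw [if_neg hsc, hrep]
          push_neg at hsc
          have hb : ∀ r ∈ Set.uIoc t₀ t, ‖F' r s‖
              ≤ C * (|s - 0| ^ (-(β + γ)) + |s - t₀| ^ (-(β + γ))) := by
            intro r hr
            rw [Set.uIoc_of_le htgt.le, Set.mem_Ioc] at hr
            have hrJ : r ∈ J := ⟨max_le (by linarith [ht₀.1, hr.1]) (by linarith [hr.1, habs.1]),
              le_min (by linarith [hr.2, habs.2]) (le_trans hr.2 ht.1.2)⟩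
            have hker := hKer r hrJ s ⟨hsc.le, by linarith [hr.1]⟩
            have h1 := ker_bound' hβ0 hγ0 hC.le hker
            refine h1.trans ?_
            have h2 : |s - r| ^ (-(β + γ)) ≤ |s - t₀| ^ (-(β + γ)) := by
              apply Real.rpow_le_rpow_of_nonpos (by rw [abs_pos, sub_ne_zero]; exact ne_of_lt hst₀) ?_ (by linarith)
              rw [abs_sub_comm s r, abs_sub_comm s t₀,
                abs_of_pos (by linarith [hr.1] : (0:ℝ) < r - s),
                abs_of_pos (by linarith : (0:ℝ) < t₀ - s)]
              linarith [hr.1]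
            exact mul_le_mul_of_nonneg_left (add_le_add_right h2 _) hC.le
          have hn := intervalIntegral.norm_integral_le_of_norm_le_const hb
          calc ‖(t - t₀)⁻¹ • ∫ r in t₀..t, F' r s‖
              = |t - t₀|⁻¹ * ‖∫ r in t₀..t, F' r s‖ := by
                rw [norm_smul, Real.norm_eq_abs, abs_inv]
            _ ≤ |t - t₀|⁻¹ * ((C * (|s - 0| ^ (-(β + γ)) + |s - t₀| ^ (-(β + γ)))) * |t - t₀|) := by
                apply mul_le_mul_of_nonneg_left hn (by positivity)
            _ = C * (|s - 0| ^ (-(β + γ)) + |s - t₀| ^ (-(β + γ))) := by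
                rw [mul_comm (C * (|s - 0| ^ (-(β + γ)) + |s - t₀| ^ (-(β + γ)))) (|t - t₀|),
                  ← mul_assoc, inv_mul_cancel₀ htabs, one_mul]
      · -- bound integrable
        have hint1 : IntegrableOn (fun s => if s ≤ c then (⨆ r : J, ‖F' (r : ℝ) s‖)
            else C * (|s - 0| ^ (-(β + γ)) + |s - t₀| ^ (-(β + γ)))) (Set.Iic c) volume := by
          apply IntegrableOn.congr_fun hSup _ measurableSet_Iic
          intro s hs
          exact (if_pos (hs : s ≤ c)).symm
        have hint2 : IntegrableOn (fun s => if s ≤ c then (⨆ r : J, ‖F' (r : ℝ) s‖)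
            else C * (|s - 0| ^ (-(β + γ)) + |s - t₀| ^ (-(β + γ)))) (Set.Ioc c t₀) volume := by
          apply IntegrableOn.congr_fun (integrableOn_ker_sum C hθ1 t₀ c t₀) _ measurableSet_Ioc
          intro s hs
          exact (if_neg (not_le.mpr hs.1)).symm
        have hu := hint1.union hint2
        rwa [Set.Iic_union_Ioc_eq_Iic (by linarith : c ≤ t₀)] at hu
      · rw [ae_restrict_iff' measurableSet_Iic]
        filter_upwards [hDeriv, hne t₀] with s hs hsne hsmem
        have hst₀ : s < t₀ := lt_of_le_of_ne hsmem hsne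
        have hdAt := hs.1 t₀ ⟨ht₀, fun h => ne_of_gt hst₀ h⟩
        have hslope := hasDerivAt_iff_tendsto_slope.mp hdAt
        have hmono : 𝓝[Set.Icc 0 T ∩ Set.Ioi t₀] t₀ ≤ 𝓝[≠] t₀ :=
          nhdsWithin_mono _ (fun y hy => ne_of_gt hy.2)
        apply (hslope.mono_left hmono).congr
        intro t
        rw [slope_def_module]
    have hsum := hAr.add hBr
    have hcomm : (∫ s in Set.Iic t₀, F' t₀ s) + F t₀ t₀
        = F t₀ t₀ + ∫ s in Set.Iic t₀, F' t₀ s := add_comm _ _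
    rw [hcomm] at hsum
    apply Filter.Tendsto.congr' _ hsum
    filter_upwards [eventually_mem_nhdsWithin] with t ht
    obtain ⟨htI, htgt'⟩ := ht
    have htgt : t₀ < t := htgt'
    rw [slope_def_module]
    have hIsplit : ∫ s in Set.Iic t, F t s
        = (∫ s in Set.Iic t₀, F t s) + ∫ s in Set.Ioc t₀ t, F t s := by
      rw [← MeasureTheory.setIntegral_union (Set.Iic_disjoint_Ioc le_rfl) measurableSet_Ioc
        ((hInt t htI).integrableOn) ((hInt t htI).integrableOn),
        Set.Iic_union_Ioc_eq_Iic htgt.le]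
    have hQint : ∫ s in Set.Iic t₀, (t - t₀)⁻¹ • (F t s - F t₀ s)
        = (t - t₀)⁻¹ • ((∫ s in Set.Iic t₀, F t s) - ∫ s in Set.Iic t₀, F t₀ s) := by
      rw [MeasureTheory.integral_smul, MeasureTheory.integral_sub
        ((hInt t htI).integrableOn) ((hInt t₀ ht₀).integrableOn)]
    rw [hQint, hIsplit, ← smul_add]
    congr 1
    ring
end
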